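/- arXiv:0903.1676 — 14 statements merged into one kernel-verified Lean document; each statement's English description precedes it below -/
import Mathlib

section
/- For every real θ ≤ 2, the function f_θ(x) = (θ + √(1 + x²))·arcsinh(x)/x is strictly increasing on (0, ∞). -/
open Real Set

lemma aux1 (t : ℝ) (ht : 0 < t) : Real.sinh t < t * Real.cosh t := by
  have key : StrictMonoOn (fun t : ℝ => t * Real.cosh t - Real.sinh t) (Set.Ici 0) := by
    apply strictMonoOn_of_deriv_pos (convex_Ici 0)
    · exact ((continuous_id.mul Real.continuous_cosh).sub Real.continuous_sinh).continuousOn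
    · intro x hx
      rw [interior_Ici] at hx
      have hx' : 0 < x := hx
      have hD : HasDerivAt (fun t : ℝ => t * Real.cosh t - Real.sinh t)
          (1 * Real.cosh x + x * Real.sinh x - Real.cosh x) x :=
        ((hasDerivAt_id x).mul (Real.hasDerivAt_cosh x)).sub (Real.hasDerivAt_sinh x)
      rw [hD.deriv]
      have := Real.sinh_pos_iff.2 hx
      nlinarith
  have h := key (Set.mem_Ici.2 (le_refl (0:ℝ))) (le_of_lt ht) ht
  simp at h
  linarith

lemma aux2 (t : ℝ) (ht : 0 < t) :
    t * (1 + 2 * Real.cosh t) < Real.sinh t * (2 + Real.cosh t) := by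
  have key : StrictMonoOn
      (fun t : ℝ => Real.sinh t * (2 + Real.cosh t) - t * (1 + 2 * Real.cosh t)) (Set.Ici 0) := by
    apply strictMonoOn_of_deriv_pos (convex_Ici 0)
    · exact ((Real.continuous_sinh.mul (continuous_const.add Real.continuous_cosh)).sub
        (continuous_id.mul (continuous_const.add (continuous_const.mul Real.continuous_cosh)))).continuousOn
    · intro x hx
      rw [interior_Ici] at hx
      have hx' : 0 < x := hx
      have hD : HasDerivAt
          (fun t : ℝ => Real.sinh t * (2 + Real.cosh t) - t * (1 + 2 * Real.cosh t))
          (Real.cosh x * (2 + Real.cosh x) + Real.sinh x * Real.sinh x -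
            (1 * (1 + 2 * Real.cosh x) + x * (2 * Real.sinh x))) x := by
        exact ((Real.hasDerivAt_sinh x).mul ((Real.hasDerivAt_cosh x).const_add 2)).sub
          ((hasDerivAt_id x).mul (((Real.hasDerivAt_cosh x).const_mul 2).const_add 1))
      rw [hD.deriv]
      have h1 := Real.cosh_sq' x
      have h2 := Real.self_lt_sinh_iff.2 hx
      have h3 := Real.sinh_pos_iff.2 hx
      nlinarith
  have h := key (Set.mem_Ici.2 (le_refl (0:ℝ))) (le_of_lt ht) ht
  simp at h
  linarith

lemma key_ineq (θ : ℝ) (hθ : θ ≤ 2) (x : ℝ) (hx : 0 < x) :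
    (1 + θ * Real.sqrt (1 + x ^ 2)) * Real.arsinh x < x * (θ + Real.sqrt (1 + x ^ 2)) := by
  set t := Real.arsinh x with hts
  have ht : 0 < t := Real.arsinh_pos_iff.2 hx
  have hS : Real.sinh t = x := Real.sinh_arsinh x
  have hC : Real.cosh t = Real.sqrt (1 + x ^ 2) := Real.cosh_arsinh x
  rw [← hC, ← hS]
  have h1 := aux1 t ht
  have h2 := aux2 t ht
  nlinarith [mul_nonneg (by linarith : (0:ℝ) ≤ 2 - θ)
    (by linarith : 0 ≤ t * Real.cosh t - Real.sinh t)]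

theorem stmt0 (θ : ℝ) (hθ : θ ≤ 2) :
    StrictMonoOn (fun x : ℝ => (θ + Real.sqrt (1 + x ^ 2)) * Real.arsinh x / x)
      (Set.Ioi (0 : ℝ)) := by
  apply strictMonoOn_of_deriv_pos (convex_Ioi 0)
  · apply ContinuousOn.div
    · exact ((continuous_const.add (Real.continuous_sqrt.comp
        (continuous_const.add (continuous_pow 2)))).mul Real.continuous_arsinh).continuousOn
    · exact continuousOn_id
    · intro x hx; exact ne_of_gt hx
  · intro x hx
    rw [interior_Ioi] at hx
    have hx0 : 0 < x := hx
    set s := Real.sqrt (1 + x ^ 2) with hs_def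
    have hs_pos : 0 < s := Real.sqrt_pos.2 (by positivity)
    have hs2 : s ^ 2 = 1 + x ^ 2 := Real.sq_sqrt (by positivity)
    have hs_deriv : HasDerivAt (fun x : ℝ => Real.sqrt (1 + x ^ 2)) (x / s) x := by
      have hinner : HasDerivAt (fun x : ℝ => 1 + x ^ 2) (2 * x) x := by
        simpa using ((hasDerivAt_pow 2 x).const_add 1)
      have := (Real.hasDerivAt_sqrt (by positivity : (1 : ℝ) + x ^ 2 ≠ 0)).comp x hinner
      refine this.congr_deriv ?_
      rw [← hs_def]
      field_simp
    have ha : HasDerivAt Real.arsinh s⁻¹ x := by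
      simpa [← hs_def] using Real.hasDerivAt_arsinh x
    have hD : HasDerivAt (fun x : ℝ => (θ + Real.sqrt (1 + x ^ 2)) * Real.arsinh x / x)
        (((x / s * Real.arsinh x + (θ + s) * s⁻¹) * x - (θ + s) * Real.arsinh x * 1) / x ^ 2)
        x := by
      exact ((hs_deriv.const_add θ).mul ha).div (hasDerivAt_id x) (ne_of_gt hx)
    rw [hD.deriv]
    apply div_pos _ (by positivity)
    have hkey := key_ineq θ hθ x hx
    have hN : ((x / s * Real.arsinh x + (θ + s) * s⁻¹) * x - (θ + s) * Real.arsinh x * 1) * s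
        = x * (θ + s) - (1 + θ * s) * Real.arsinh x := by
      field_simp
      linear_combination (-Real.arsinh x) * hs2
    rw [← hs_def] at hkey
    by_contra hcon
    push_neg at hcon
    nlinarith [hN, hkey, hs_pos]
end

section
/- For every real θ > 2, the function f_θ(x) = (θ + √(1 + x²))·arcsinh(x)/x has a unique minimum on (0, ∞); that is, there exists a unique x₀ > 0 such that f_θ(x₀) < f_θ(x) for all x > 0 with x ≠ x₀. -/
open Real Set

lemma aux_pos (g g' : ℝ → ℝ) (hd : ∀ t, HasDerivAt g (g' t) t) (h0 : g 0 = 0)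
    (hp : ∀ t, 0 < t → 0 < g' t) : ∀ t, 0 < t → 0 < g t := by
  have hmono : StrictMonoOn g (Ici 0) := by
    apply strictMonoOn_of_deriv_pos (convex_Ici 0)
    · exact (continuous_iff_continuousAt.2 fun t => (hd t).continuousAt).continuousOn
    · intro t ht
      rw [interior_Ici] at ht
      rw [(hd t).deriv]
      exact hp t ht
  intro t ht
  have := hmono (self_mem_Ici) (le_of_lt ht) ht
  rwa [h0] at this

lemma hD : ∀ t : ℝ, 0 < t → 0 < t * Real.cosh t - Real.sinh t := by
  apply aux_pos _ (fun t => t * Real.sinh t)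
  · intro t
    have h1 : HasDerivAt (fun t : ℝ => t * Real.cosh t) (1 * Real.cosh t + t * Real.sinh t) t :=
      (hasDerivAt_id t).mul (Real.hasDerivAt_cosh t)
    have := h1.sub (Real.hasDerivAt_sinh t)
    refine this.congr_deriv ?_
    ring
  · simp
  · intro t ht
    exact mul_pos ht (Real.sinh_pos_iff.2 ht)

lemma hP' : ∀ t : ℝ, 0 < t → 0 < t * Real.sinh t + 2 - 2 * Real.cosh t := by
  apply aux_pos _ (fun t => t * Real.cosh t - Real.sinh t)
  · intro t
    have h1 : HasDerivAt (fun t : ℝ => t * Real.sinh t) (1 * Real.sinh t + t * Real.cosh t) t :=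
      (hasDerivAt_id t).mul (Real.hasDerivAt_sinh t)
    have := (h1.add_const 2).sub ((Real.hasDerivAt_cosh t).const_mul 2)
    refine this.congr_deriv ?_
    ring
  · simp
  · exact hD

lemma hP : ∀ t : ℝ, 0 < t → 0 < t * Real.cosh t + 2 * t - 3 * Real.sinh t := by
  apply aux_pos _ (fun t => t * Real.sinh t + 2 - 2 * Real.cosh t)
  · intro t
    have h1 : HasDerivAt (fun t : ℝ => t * Real.cosh t) (1 * Real.cosh t + t * Real.sinh t) t :=
      (hasDerivAt_id t).mul (Real.hasDerivAt_cosh t)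
    have h2 : HasDerivAt (fun t : ℝ => 2 * t) 2 t := by
      simpa using (hasDerivAt_id t).const_mul 2
    have := (h1.add h2).sub ((Real.hasDerivAt_sinh t).const_mul 3)
    refine this.congr_deriv ?_
    ring
  · simp
  · exact hP'

lemma hQ : ∀ t : ℝ, 0 < t → 0 < t * Real.sinh t * Real.cosh t + t ^ 2 - 2 * Real.sinh t ^ 2 := by
  apply aux_pos _ (fun t => Real.sinh t * Real.cosh t + t * Real.cosh t ^ 2 + t * Real.sinh t ^ 2
      + 2 * t - 4 * (Real.sinh t * Real.cosh t))
  · intro t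
    have hs := Real.hasDerivAt_sinh t
    have hc := Real.hasDerivAt_cosh t
    have h1 : HasDerivAt (fun t : ℝ => t * Real.sinh t * Real.cosh t)
        ((1 * Real.sinh t + t * Real.cosh t) * Real.cosh t + t * Real.sinh t * Real.sinh t) t :=
      (((hasDerivAt_id t).mul hs).mul hc)
    have h2 : HasDerivAt (fun t : ℝ => t ^ 2) (2 * t) t := by
      simpa using hasDerivAt_pow 2 t
    have h3 : HasDerivAt (fun t : ℝ => 2 * Real.sinh t ^ 2)
        (2 * (2 * Real.sinh t * Real.cosh t)) t := by
      have : HasDerivAt (fun t : ℝ => Real.sinh t ^ 2)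
          (2 * Real.sinh t ^ (2 - 1) * Real.cosh t) t := hs.pow 2
      simpa using this.const_mul 2
    have := (h1.add h2).sub h3
    refine this.congr_deriv ?_
    ring
  · simp
  · intro t ht
    -- = P(2t)/2 using double angle; prove with nlinarith from hP (2t) and cosh_sq
    have hp := hP (2 * t) (by linarith)
    have c2 : Real.cosh (2 * t) = Real.cosh t ^ 2 + Real.sinh t ^ 2 := Real.cosh_two_mul t
    have s2 : Real.sinh (2 * t) = 2 * Real.sinh t * Real.cosh t := Real.sinh_two_mul t
    have csq : Real.cosh t ^ 2 = Real.sinh t ^ 2 + 1 := Real.cosh_sq t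
    nlinarith [hp, c2, s2, csq]


lemma psi_mono : StrictMonoOn
    (fun t : ℝ => (Real.sinh t * Real.cosh t - t) / (t * Real.cosh t - Real.sinh t)) (Ioi 0) := by
  have hderiv : ∀ t : ℝ, 0 < t → HasDerivAt
      (fun t : ℝ => (Real.sinh t * Real.cosh t - t) / (t * Real.cosh t - Real.sinh t))
      (((Real.cosh t * Real.cosh t + Real.sinh t * Real.sinh t - 1) *
          (t * Real.cosh t - Real.sinh t) -
        (Real.sinh t * Real.cosh t - t) * (1 * Real.cosh t + t * Real.sinh t - Real.cosh t)) /
          (t * Real.cosh t - Real.sinh t) ^ 2) t := by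
    intro t ht
    have hs := Real.hasDerivAt_sinh t
    have hc := Real.hasDerivAt_cosh t
    have hN : HasDerivAt (fun t : ℝ => Real.sinh t * Real.cosh t - t)
        (Real.cosh t * Real.cosh t + Real.sinh t * Real.sinh t - 1) t :=
      (hs.mul hc).sub (hasDerivAt_id t)
    have hDd : HasDerivAt (fun t : ℝ => t * Real.cosh t - Real.sinh t)
        (1 * Real.cosh t + t * Real.sinh t - Real.cosh t) t :=
      ((hasDerivAt_id t).mul hc).sub hs
    exact hN.div hDd (ne_of_gt (hD t ht))
  apply strictMonoOn_of_deriv_pos (convex_Ioi 0)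
  · intro t ht
    exact ((hderiv t ht).continuousAt).continuousWithinAt
  · intro t ht
    rw [interior_Ioi] at ht
    rw [(hderiv t ht).deriv]
    apply div_pos
    · have hq := hQ t ht
      have hsp : 0 < Real.sinh t := Real.sinh_pos_iff.2 ht
      have csq : Real.cosh t ^ 2 = Real.sinh t ^ 2 + 1 := Real.cosh_sq t
      nlinarith [mul_pos hsp hq]
    · exact pow_pos (hD t ht) 2


theorem stmt1 (θ : ℝ) (hθ : 2 < θ) :
    ∃! x₀ : ℝ, 0 < x₀ ∧ ∀ x : ℝ, 0 < x → x ≠ x₀ →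
      (θ + Real.sqrt (1 + x₀ ^ 2)) * Real.arsinh x₀ / x₀ <
        (θ + Real.sqrt (1 + x ^ 2)) * Real.arsinh x / x := by
  have hθ0 : 0 < θ := by linarith
  set G : ℝ → ℝ := fun t => θ * (t * Real.cosh t - Real.sinh t) - (Real.sinh t * Real.cosh t - t)
    with hGdef
  -- t₁ : G t₁ > 0
  set t₁ : ℝ := min (1/2) ((θ - 2)/θ) with ht₁def
  have ht₁pos : 0 < t₁ := lt_min (by norm_num) (div_pos (by linarith) hθ0)
  have ht₁half : t₁ ≤ 1/2 := min_le_left _ _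
  have hcosh_t₁ : 2 * Real.cosh t₁ < θ := by
    have h1 : 1 - t₁ ≤ Real.exp (-t₁) := by
      have := Real.add_one_le_exp (-t₁); linarith
    have h2 : Real.exp t₁ ≤ 1 / (1 - t₁) := by
      rw [le_div_iff₀ (by linarith)]
      calc Real.exp t₁ * (1 - t₁) ≤ Real.exp t₁ * Real.exp (-t₁) := by
            apply mul_le_mul_of_nonneg_left h1 (Real.exp_pos _).le
        _ = 1 := by rw [← Real.exp_add]; simp
    have h3 : 2/θ ≤ 1 - t₁ := by
      have h := min_le_right (1/2:ℝ) ((θ - 2)/θ)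
      rw [le_div_iff₀ hθ0] at h
      rw [div_le_iff₀ hθ0]
      linarith
    have h4 : Real.exp (-t₁) < 1 := by
      rw [← Real.exp_zero]
      exact Real.exp_lt_exp.2 (by linarith)
    have h5 : 1/(1 - t₁) ≤ θ/2 := by
      rw [div_le_div_iff₀ (by linarith) (by norm_num)]
      have := (div_le_iff₀ hθ0).1 h3
      linarith
    have h6 := Real.cosh_eq t₁
    linarith
  have hGt₁ : 0 < G t₁ := by
    have hDpos := hD t₁ ht₁pos
    have hp := hP (2 * t₁) (by linarith)
    have c2 : Real.cosh (2 * t₁) = Real.cosh t₁ ^ 2 + Real.sinh t₁ ^ 2 := Real.cosh_two_mul t₁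
    have s2 : Real.sinh (2 * t₁) = 2 * Real.sinh t₁ * Real.cosh t₁ := Real.sinh_two_mul t₁
    have csq : Real.cosh t₁ ^ 2 = Real.sinh t₁ ^ 2 + 1 := Real.cosh_sq t₁
    -- θ D - N > 2 cosh t₁ * D - N = P(2t₁)/2 > 0
    have h2c : 2 * Real.cosh t₁ * (t₁ * Real.cosh t₁ - Real.sinh t₁)
        < θ * (t₁ * Real.cosh t₁ - Real.sinh t₁) :=
      mul_lt_mul_of_pos_right hcosh_t₁ hDpos
    simp only [hGdef]
    nlinarith [hp, c2, s2, csq, h2c]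
  -- t₂ : G t₂ < 0
  set t₂ : ℝ := 8 * θ + 5 with ht₂def
  have ht₂pos : 0 < t₂ := by linarith
  have hsinh_t₂ : t₂/2 + t₂^2/8 ≤ Real.sinh t₂ := by
    have h1 : 1 + t₂/2 ≤ Real.exp (t₂/2) := by
      have := Real.add_one_le_exp (t₂/2); linarith
    have h2 : (1 + t₂/2)^2 ≤ Real.exp t₂ := by
      calc (1 + t₂/2)^2 ≤ Real.exp (t₂/2)^2 := by
            apply pow_le_pow_left₀ (by linarith) h1
        _ = Real.exp t₂ := by rw [sq, ← Real.exp_add]; ring_nf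
    have h3 : Real.exp (-t₂) ≤ 1 := by
      rw [← Real.exp_zero]
      exact Real.exp_le_exp.2 (by linarith)
    rw [Real.sinh_eq]
    nlinarith
  have hGt₂ : G t₂ < 0 := by
    have hc : 1 ≤ Real.cosh t₂ := Real.one_le_cosh t₂
    have hs9 : t₂ * (9/8) ≤ Real.sinh t₂ - θ * t₂ := by
      have : t₂ ^ 2 = (8*θ+5) * t₂ := by rw [ht₂def]; ring
      nlinarith
    have hsp : 0 < Real.sinh t₂ := Real.sinh_pos_iff.2 ht₂pos
    have hkey : Real.sinh t₂ - θ * t₂ ≤ Real.cosh t₂ * (Real.sinh t₂ - θ * t₂) :=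
      le_mul_of_one_le_left (by nlinarith) hc
    simp only [hGdef]
    nlinarith [mul_pos hθ0 hsp]
  -- IVT
  have hGcont : Continuous G := by
    simp only [hGdef]
    fun_prop
  have ht₁₂ : t₁ ≤ t₂ := by linarith
  obtain ⟨t₀, ht₀mem, hGt₀⟩ : ∃ t₀ ∈ Icc t₁ t₂, G t₀ = 0 := by
    have := intermediate_value_Icc' ht₁₂ hGcont.continuousOn (a := t₁) (b := t₂)
    have h0 : (0:ℝ) ∈ Icc (G t₂) (G t₁) := ⟨hGt₂.le, hGt₁.le⟩
    obtain ⟨t₀, ht₀, h⟩ := this h0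
    exact ⟨t₀, ht₀, h⟩
  have ht₀pos : 0 < t₀ := lt_of_lt_of_le ht₁pos ht₀mem.1
  have hDt₀ := hD t₀ ht₀pos
  have hθeq : θ = (Real.sinh t₀ * Real.cosh t₀ - t₀) / (t₀ * Real.cosh t₀ - Real.sinh t₀) := by
    rw [eq_div_iff (ne_of_gt hDt₀)]
    simp only [hGdef] at hGt₀
    linarith
  -- sign of G
  have hGsign₁ : ∀ t, 0 < t → t < t₀ → 0 < G t := by
    intro t ht htt₀
    have := psi_mono (mem_Ioi.2 ht) (mem_Ioi.2 ht₀pos) htt₀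
    dsimp only at this
    rw [← hθeq] at this
    have hDt := hD t ht
    rw [div_lt_iff₀ hDt] at this
    simp only [hGdef]
    linarith
  have hGsign₂ : ∀ t, t₀ < t → G t < 0 := by
    intro t htt₀
    have ht : 0 < t := lt_trans ht₀pos htt₀
    have := psi_mono (mem_Ioi.2 ht₀pos) (mem_Ioi.2 ht) htt₀
    dsimp only at this
    rw [← hθeq] at this
    have hDt := hD t ht
    rw [lt_div_iff₀ hDt] at this
    simp only [hGdef]
    linarith
  -- F and its derivative
  set F : ℝ → ℝ := fun t => (θ + Real.cosh t) * t / Real.sinh t with hFdef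
  have hFderiv : ∀ t : ℝ, 0 < t → HasDerivAt F
      (((Real.sinh t * t + (θ + Real.cosh t) * 1) * Real.sinh t -
        (θ + Real.cosh t) * t * Real.cosh t) / Real.sinh t ^ 2) t := by
    intro t ht
    have hsne : Real.sinh t ≠ 0 := ne_of_gt (Real.sinh_pos_iff.2 ht)
    have h1 : HasDerivAt (fun t : ℝ => (θ + Real.cosh t) * t)
        (Real.sinh t * t + (θ + Real.cosh t) * 1) t :=
      (((Real.hasDerivAt_cosh t).const_add θ)).mul (hasDerivAt_id t)
    exact h1.div (Real.hasDerivAt_sinh t) hsne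
  have hnum : ∀ t : ℝ, (Real.sinh t * t + (θ + Real.cosh t) * 1) * Real.sinh t -
      (θ + Real.cosh t) * t * Real.cosh t = -G t := by
    intro t
    have := Real.cosh_sq_sub_sinh_sq t
    simp only [hGdef]
    linear_combination (-t) * this
  -- strict anti on Ioc 0 t₀
  have hanti : StrictAntiOn F (Ioc 0 t₀) := by
    apply strictAntiOn_of_deriv_neg (convex_Ioc 0 t₀)
    · intro t ht
      exact ((hFderiv t ht.1).continuousAt).continuousWithinAt
    · intro t ht
      rw [interior_Ioc] at ht
      rw [(hFderiv t ht.1).deriv, hnum t]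
      apply div_neg_of_neg_of_pos
      · have := hGsign₁ t ht.1 ht.2; linarith
      · exact pow_pos (Real.sinh_pos_iff.2 ht.1) 2
  have hmono : StrictMonoOn F (Ici t₀) := by
    apply strictMonoOn_of_deriv_pos (convex_Ici t₀)
    · intro t ht
      exact ((hFderiv t (lt_of_lt_of_le ht₀pos ht)).continuousAt).continuousWithinAt
    · intro t ht
      rw [interior_Ici] at ht
      rw [(hFderiv t (lt_trans ht₀pos ht)).deriv, hnum t]
      apply div_pos
      · have := hGsign₂ t ht; linarith
      · exact pow_pos (Real.sinh_pos_iff.2 (lt_trans ht₀pos ht)) 2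
  have hFmin : ∀ t : ℝ, 0 < t → t ≠ t₀ → F t₀ < F t := by
    intro t ht htne
    rcases lt_or_gt_of_ne htne with h | h
    · exact hanti ⟨ht, h.le⟩ ⟨ht₀pos, le_refl _⟩ h
    · exact hmono (self_mem_Ici) h.le h
  -- transfer to x
  have hfF : ∀ x : ℝ, 0 < x →
      (θ + Real.sqrt (1 + x ^ 2)) * Real.arsinh x / x = F (Real.arsinh x) := by
    intro x hx
    simp only [hFdef]
    rw [← Real.cosh_arsinh, ← Real.sinh_arsinh x]
    rw [Real.arsinh_sinh]
  refine ⟨Real.sinh t₀, ⟨Real.sinh_pos_iff.2 ht₀pos, ?_⟩, ?_⟩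
  · intro x hx hxne
    have hx₀ : (θ + Real.sqrt (1 + Real.sinh t₀ ^ 2)) * Real.arsinh (Real.sinh t₀) /
        Real.sinh t₀ = F t₀ := by
      rw [hfF _ (Real.sinh_pos_iff.2 ht₀pos), Real.arsinh_sinh]
    rw [hx₀, hfF x hx]
    apply hFmin
    · exact Real.arsinh_pos_iff.2 hx
    · intro h
      apply hxne
      rw [← Real.sinh_arsinh x, h]
  · rintro y ⟨hy, hymin⟩
    by_contra hne
    have h1 := hymin (Real.sinh t₀) (Real.sinh_pos_iff.2 ht₀pos) (fun h => hne h.symm)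
    have h2 : ∀ x : ℝ, 0 < x → x ≠ Real.sinh t₀ →
        (θ + Real.sqrt (1 + Real.sinh t₀ ^ 2)) * Real.arsinh (Real.sinh t₀) / Real.sinh t₀ <
        (θ + Real.sqrt (1 + x ^ 2)) * Real.arsinh x / x := by
      intro x hx hxne
      have hx₀ : (θ + Real.sqrt (1 + Real.sinh t₀ ^ 2)) * Real.arsinh (Real.sinh t₀) /
          Real.sinh t₀ = F t₀ := by
        rw [hfF _ (Real.sinh_pos_iff.2 ht₀pos), Real.arsinh_sinh]
      rw [hx₀, hfF x hx]
      apply hFmin _ (Real.arsinh_pos_iff.2 hx)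
      intro h
      exact hxne (by rw [← Real.sinh_arsinh x, h])
    have h3 := h2 y hy hne
    linarith
end

section
/- For every real θ ≤ 2 and every x > 0, one has (1 + θ)·x < (θ + √(1 + x²))·arcsinh(x). -/
open Real Set

lemma auxA : StrictMonoOn (fun t : ℝ => t * Real.cosh t - Real.sinh t) (Ici 0) := by
  apply strictMonoOn_of_deriv_pos (convex_Ici _)
  · exact ((continuous_id.mul Real.continuous_cosh).sub Real.continuous_sinh).continuousOn
  · intro t ht
    rw [interior_Ici, mem_Ioi] at ht
    have : HasDerivAt (fun t : ℝ => t * Real.cosh t - Real.sinh t)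
        (1 * Real.cosh t + t * Real.sinh t - Real.cosh t) t :=
      ((hasDerivAt_id t).mul (Real.hasDerivAt_cosh t)).sub (Real.hasDerivAt_sinh t)
    rw [this.deriv]
    have := Real.sinh_pos_iff.2 ht
    nlinarith

lemma auxA' {t : ℝ} (ht : 0 < t) : Real.sinh t < t * Real.cosh t := by
  have := auxA (self_mem_Ici) (le_of_lt ht) ht
  simp at this; linarith

lemma auxB' {t : ℝ} (ht : 0 < t) : 2 * Real.cosh t - 2 < t * Real.sinh t := by
  have h : StrictMonoOn (fun t : ℝ => t * Real.sinh t - 2 * Real.cosh t) (Ici 0) := by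
    apply strictMonoOn_of_deriv_pos (convex_Ici _)
    · exact ((continuous_id.mul Real.continuous_sinh).sub
        (continuous_const.mul Real.continuous_cosh)).continuousOn
    · intro t ht
      rw [interior_Ici, mem_Ioi] at ht
      have : HasDerivAt (fun t : ℝ => t * Real.sinh t - 2 * Real.cosh t)
          ((1 * Real.sinh t + t * Real.cosh t) - 2 * Real.sinh t) t :=
        ((hasDerivAt_id t).mul (Real.hasDerivAt_sinh t)).sub
          ((Real.hasDerivAt_cosh t).const_mul 2)
      rw [this.deriv]
      have := auxA' ht
      nlinarith
  have := h (self_mem_Ici) (le_of_lt ht) ht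
  simp at this; linarith

lemma auxC {t : ℝ} (ht : 0 < t) : 3 * Real.sinh t < t * (2 + Real.cosh t) := by
  have h : StrictMonoOn (fun t : ℝ => t * (2 + Real.cosh t) - 3 * Real.sinh t) (Ici 0) := by
    apply strictMonoOn_of_deriv_pos (convex_Ici _)
    · exact ((continuous_id.mul (continuous_const.add Real.continuous_cosh)).sub
        (continuous_const.mul Real.continuous_sinh)).continuousOn
    · intro t ht
      rw [interior_Ici, mem_Ioi] at ht
      have : HasDerivAt (fun t : ℝ => t * (2 + Real.cosh t) - 3 * Real.sinh t)
          ((1 * (2 + Real.cosh t) + t * (0 + Real.sinh t)) - 3 * Real.cosh t) t :=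
        ((hasDerivAt_id t).mul ((hasDerivAt_const t 2).add (Real.hasDerivAt_cosh t))).sub
          ((Real.hasDerivAt_sinh t).const_mul 3)
      rw [this.deriv]
      have := auxB' ht
      nlinarith
  have := h (self_mem_Ici) (le_of_lt ht) ht
  simp at this; linarith

theorem stmt2 (θ : ℝ) (hθ : θ ≤ 2) (x : ℝ) (hx : 0 < x) :
    (1 + θ) * x < (θ + Real.sqrt (1 + x ^ 2)) * Real.arsinh x := by
  set t := Real.arsinh x with htdef
  have ht : 0 < t := Real.arsinh_pos_iff.2 hx
  have hs : Real.sinh t = x := Real.sinh_arsinh x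
  have hc : Real.cosh t = Real.sqrt (1 + x ^ 2) := Real.cosh_arsinh x
  rw [← hc, ← hs]
  have h3 := auxC ht
  have h4 : t < Real.sinh t := Real.self_lt_sinh_iff.2 ht
  nlinarith [mul_nonneg (sub_nonneg.2 hθ) (sub_nonneg.2 h4.le)]
end

section
/- Let r > 0 and let θ ≤ 2 be real. For every x with 0 < x ≤ r, one has (θ + √(1 + x²))·arcsinh(x) ≤ ((θ + √(1 + r²))·arcsinh(r)/r)·x. -/
open Real

private lemma sq_hd (t : ℝ) : HasDerivAt (fun t : ℝ => Real.sqrt (1 + t ^ 2)) (t / Real.sqrt (1 + t ^ 2)) t := by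
  have h1 : HasDerivAt (fun t : ℝ => 1 + t ^ 2) (2 * t) t := by
    simpa using ((hasDerivAt_pow 2 t).const_add 1)
  have hpos : 0 < 1 + t ^ 2 := by positivity
  have h2 := h1.sqrt hpos.ne'
  have : 2 * t / (2 * Real.sqrt (1 + t ^ 2)) = t / Real.sqrt (1 + t ^ 2) :=
    mul_div_mul_left _ _ two_ne_zero
  rwa [this] at h2

private lemma sqrt_pos' (t : ℝ) : 0 < Real.sqrt (1 + t ^ 2) := Real.sqrt_pos.2 (by positivity)

private lemma sqrt_one_le (t : ℝ) : 1 ≤ Real.sqrt (1 + t ^ 2) := by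
  nlinarith [Real.sq_sqrt (show (0:ℝ) ≤ 1 + t ^ 2 by positivity), Real.sqrt_nonneg (1 + t ^ 2),
    sq_nonneg t]

-- Lemma A : arsinh t ≤ t for t ≥ 0
private lemma lemA {t : ℝ} (ht : 0 ≤ t) : Real.arsinh t ≤ t := by
  have hmono : Monotone (fun t : ℝ => t - Real.arsinh t) := by
    apply monotone_of_deriv_nonneg
    · exact differentiable_id.sub Real.differentiable_arsinh
    · intro y
      have hd : HasDerivAt (fun t : ℝ => t - Real.arsinh t) (1 - (Real.sqrt (1 + y ^ 2))⁻¹) y :=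
        (hasDerivAt_id y).sub (Real.hasDerivAt_arsinh y)
      rw [hd.deriv]
      have h1 := sqrt_one_le y
      have h2 : (Real.sqrt (1 + y ^ 2))⁻¹ ≤ 1 := inv_le_one_of_one_le₀ h1
      linarith
  have := hmono ht
  simpa using this

-- Lemma B : t ≤ arsinh t * sqrt (1+t^2) for t ≥ 0
private lemma lemB {t : ℝ} (ht : 0 ≤ t) : t ≤ Real.arsinh t * Real.sqrt (1 + t ^ 2) := by
  have hmono : Monotone (fun t : ℝ => Real.arsinh t * Real.sqrt (1 + t ^ 2) - t) := by
    apply monotone_of_deriv_nonneg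
    · exact ((Real.differentiable_arsinh).mul (fun y => (sq_hd y).differentiableAt)).sub differentiable_id
    · intro y
      have hd : HasDerivAt (fun t : ℝ => Real.arsinh t * Real.sqrt (1 + t ^ 2) - t)
          ((Real.sqrt (1 + y ^ 2))⁻¹ * Real.sqrt (1 + y ^ 2) + Real.arsinh y * (y / Real.sqrt (1 + y ^ 2)) - 1) y :=
        ((Real.hasDerivAt_arsinh y).mul (sq_hd y)).sub (hasDerivAt_id y)
      rw [hd.deriv]
      have hs := sqrt_pos' y
      rw [inv_mul_cancel₀ hs.ne']
      have : 0 ≤ Real.arsinh y * (y / Real.sqrt (1 + y ^ 2)) := by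
        rcases le_or_gt 0 y with h | h
        · exact mul_nonneg (Real.arsinh_nonneg_iff.2 h) (by positivity)
        · have h1 : Real.arsinh y ≤ 0 := Real.arsinh_nonpos_iff.2 h.le
          have h2 : y / Real.sqrt (1 + y ^ 2) ≤ 0 := div_nonpos_iff.2 (Or.inr ⟨h.le, hs.le⟩)
          nlinarith
      linarith
  have := hmono ht
  simpa using this

private lemma hdC (y : ℝ) : HasDerivAt
    (fun t : ℝ => t * (Real.sqrt (1 + t ^ 2) + 2) - Real.arsinh t * (2 * Real.sqrt (1 + t ^ 2) + 1))
    (1 * (Real.sqrt (1 + y ^ 2) + 2) + y * (y / Real.sqrt (1 + y ^ 2)) -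
      ((Real.sqrt (1 + y ^ 2))⁻¹ * (2 * Real.sqrt (1 + y ^ 2) + 1) + Real.arsinh y * (2 * (y / Real.sqrt (1 + y ^ 2))))) y :=
  ((hasDerivAt_id y).mul ((sq_hd y).add_const 2)).sub
    ((Real.hasDerivAt_arsinh y).mul (((sq_hd y).const_mul 2).add_const 1))

-- Lemma C : arsinh t * (2 * sqrt(1+t^2) + 1) ≤ t * (sqrt(1+t^2) + 2) for t ≥ 0
private lemma lemC {t : ℝ} (ht : 0 ≤ t) :
    Real.arsinh t * (2 * Real.sqrt (1 + t ^ 2) + 1) ≤ t * (Real.sqrt (1 + t ^ 2) + 2) := by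
  have hmono : Monotone (fun t : ℝ => t * (Real.sqrt (1 + t ^ 2) + 2) - Real.arsinh t * (2 * Real.sqrt (1 + t ^ 2) + 1)) := by
    apply monotone_of_deriv_nonneg
    · exact fun y => (hdC y).differentiableAt
    · intro y
      rw [(hdC y).deriv]
      have hs := sqrt_pos' y
      set s := Real.sqrt (1 + y ^ 2) with hsdef
      have hsq : s ^ 2 = 1 + y ^ 2 := Real.sq_sqrt (by positivity)
      have key : 1 * (s + 2) + y * (y / s) - (s⁻¹ * (2 * s + 1) + Real.arsinh y * (2 * (y / s)))
          = 2 * y * (y - Real.arsinh y) / s := by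
        field_simp
        nlinarith [hsq]
      rw [key]
      apply div_nonneg _ hs.le
      rcases le_or_gt 0 y with h | h
      · have := lemA h
        exact mul_nonneg (by positivity) (by linarith)
      · have h2 : y ≤ Real.arsinh y := by
          have := lemA (t := -y) (by linarith)
          rw [Real.arsinh_neg] at this; linarith
        nlinarith
  have := hmono ht
  simpa using this

theorem stmt3 (r : ℝ) (hr : 0 < r) (θ : ℝ) (hθ : θ ≤ 2)
    (x : ℝ) (hx : 0 < x) (hxr : x ≤ r) :
    (θ + Real.sqrt (1 + x ^ 2)) * Real.arsinh x ≤
      ((θ + Real.sqrt (1 + r ^ 2)) * Real.arsinh r / r) * x := by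
  have hmono : MonotoneOn (fun t : ℝ => (θ + Real.sqrt (1 + t ^ 2)) * Real.arsinh t / t) (Set.Icc x r) := by
    have hconv : Convex ℝ (Set.Icc x r) := convex_Icc x r
    apply monotoneOn_of_deriv_nonneg hconv
    · apply ContinuousOn.div
      · exact (Continuous.add continuous_const (by continuity)).mul Real.continuous_arsinh |>.continuousOn
      · exact continuousOn_id
      · intro t ht; exact (lt_of_lt_of_le hx ht.1).ne'
    · intro t ht
      rw [interior_Icc] at ht
      have htpos : 0 < t := lt_trans hx ht.1
      exact (((((sq_hd t).const_add θ).mul (Real.hasDerivAt_arsinh t)).div (hasDerivAt_id t) htpos.ne').differentiableAt).differentiableWithinAt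
    · intro t ht
      rw [interior_Icc] at ht
      have htpos : 0 < t := lt_trans hx ht.1
      have hs := sqrt_pos' t
      set s := Real.sqrt (1 + t ^ 2) with hsdef
      have hsq : s ^ 2 = 1 + t ^ 2 := Real.sq_sqrt (by positivity)
      have hd : HasDerivAt (fun t : ℝ => (θ + Real.sqrt (1 + t ^ 2)) * Real.arsinh t / t)
          (((t / s * Real.arsinh t + (θ + s) * s⁻¹) * t - (θ + s) * Real.arsinh t * 1) / t ^ 2) t :=
        (((sq_hd t).const_add θ).mul (Real.hasDerivAt_arsinh t)).div (hasDerivAt_id t) htpos.ne'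
      rw [hd.deriv]
      apply div_nonneg _ (by positivity)
      have key : (t / s * Real.arsinh t + (θ + s) * s⁻¹) * t - (θ + s) * Real.arsinh t * 1
          = (θ * (t - Real.arsinh t * s) + (t * s - Real.arsinh t)) / s := by
        field_simp
        linear_combination (-(Real.arsinh t)) * hsq
      rw [key]
      apply div_nonneg _ hs.le
      have hB : t ≤ Real.arsinh t * s := lemB htpos.le
      have hC : Real.arsinh t * (2 * s + 1) ≤ t * (s + 2) := lemC htpos.le
      nlinarith [hB, hC]
  have h := hmono (Set.left_mem_Icc.2 hxr) (Set.right_mem_Icc.2 hxr) hxr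
  simp only at h
  calc (θ + Real.sqrt (1 + x ^ 2)) * Real.arsinh x
      = (θ + Real.sqrt (1 + x ^ 2)) * Real.arsinh x / x * x := by field_simp
    _ ≤ (θ + Real.sqrt (1 + r ^ 2)) * Real.arsinh r / r * x :=
        mul_le_mul_of_nonneg_right h hx.le
end

section
/- Let r > 0 and let θ ≤ 2 be real. The constant 1 + θ in the lower bound is best possible: for every real c > 1 + θ there exists x with 0 < x ≤ r such that c·x > (θ + √(1 + x²))·arcsinh(x). -/
open Real Filter Set Topology

theorem stmt4 (r : ℝ) (hr : 0 < r) (θ : ℝ) (hθ : θ ≤ 2)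
    (c : ℝ) (hc : 1 + θ < c) :
    ∃ x : ℝ, 0 < x ∧ x ≤ r ∧
      (θ + Real.sqrt (1 + x ^ 2)) * Real.arsinh x < c * x := by
  set f : ℝ → ℝ := fun x => (θ + Real.sqrt (1 + x ^ 2)) * Real.arsinh x with hf
  have hsq : HasDerivAt (fun x : ℝ => 1 + x ^ 2) 0 0 := by
    have : HasDerivAt (fun x : ℝ => 1 + x ^ 2) (0 + 2 * 0 ^ 1) 0 :=
      (hasDerivAt_const 0 (1:ℝ)).add ((hasDerivAt_pow 2 0))
    simpa using this
  have hsqrt : HasDerivAt (fun x : ℝ => Real.sqrt (1 + x ^ 2)) 0 0 := by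
    have h := hsq.sqrt (by norm_num)
    simpa using h
  have hfac : HasDerivAt (fun x : ℝ => θ + Real.sqrt (1 + x ^ 2)) 0 0 :=
    by simpa using hsqrt
  have harsinh : HasDerivAt Real.arsinh 1 0 := by
    simpa using Real.hasDerivAt_arsinh 0
  have hderiv : HasDerivAt f (1 + θ) 0 := by
    have h := hfac.mul harsinh
    simp only [Real.arsinh_zero, mul_zero, zero_mul, zero_add, mul_one] at h
    have : (θ + Real.sqrt (1 + (0:ℝ) ^ 2)) = 1 + θ := by
      rw [show (1 + (0:ℝ)^2) = 1 by ring, Real.sqrt_one]; ring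
    rwa [this] at h
  have hslope : Tendsto (slope f 0) (𝓝[≠] 0) (𝓝 (1 + θ)) :=
    hasDerivAt_iff_tendsto_slope.mp hderiv
  have hev : ∀ᶠ x in 𝓝[≠] (0:ℝ), slope f 0 x < c :=
    hslope.eventually (Filter.Tendsto.eventually_lt_const hc tendsto_id |>.mono fun _ h => h) |>.mono
      fun x hx => hx
  have hev' : ∀ᶠ x in 𝓝[>] (0:ℝ), slope f 0 x < c :=
    hev.filter_mono (nhdsWithin_mono 0 fun x hx => ne_of_gt hx)
  have hIoo : Ioo (0:ℝ) r ∈ 𝓝[>] (0:ℝ) := Ioo_mem_nhdsGT_of_mem ⟨le_refl 0, hr⟩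
  obtain ⟨x, hx1, hx2⟩ := (hev'.and (eventually_of_mem hIoo fun x hx => hx)).exists
  obtain ⟨hx0, hxr⟩ := hx2
  refine ⟨x, hx0, le_of_lt hxr, ?_⟩
  have hs : slope f 0 x = f x / x := by
    simp [slope, hf, Real.arsinh_zero, div_eq_inv_mul]
  rw [hs] at hx1
  have h2 := (div_lt_iff₀ hx0).mp hx1
  simpa [hf] using h2
end

section
/- For every real θ > 2 and every x > 0, one has 4·(1 − 1/θ²)·x ≤ (θ + √(1 + x²))·arcsinh(x). -/
open Real

lemma pade_log (y : ℝ) (hy : 1 ≤ y) :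
    5 / 6 * ((5 * y ^ 4 + 32 * y ^ 3 - 32 * y - 5) /
      (y ^ 4 + 16 * y ^ 3 + 36 * y ^ 2 + 16 * y + 1)) ≤ Real.log y := by
  set f : ℝ → ℝ := fun t => Real.log t -
    5 / 6 * ((5 * t ^ 4 + 32 * t ^ 3 - 32 * t - 5) /
      (t ^ 4 + 16 * t ^ 3 + 36 * t ^ 2 + 16 * t + 1)) with hf
  have key : ∀ t : ℝ, 1 ≤ t → HasDerivAt f
      ((t - 1) ^ 8 / (t * (t ^ 4 + 16 * t ^ 3 + 36 * t ^ 2 + 16 * t + 1) ^ 2)) t := by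
    intro t ht
    have ht0 : (0:ℝ) < t := lt_of_lt_of_le one_pos ht
    have hD : (0:ℝ) < t ^ 4 + 16 * t ^ 3 + 36 * t ^ 2 + 16 * t + 1 := by positivity
    have hlog : HasDerivAt Real.log (1 / t) t := by
      simpa [one_div] using Real.hasDerivAt_log (ne_of_gt ht0)
    have hN : HasDerivAt (fun t : ℝ => 5 * t ^ 4 + 32 * t ^ 3 - 32 * t - 5)
        (20 * t ^ 3 + 96 * t ^ 2 - 32) t := by
      have : HasDerivAt (fun t : ℝ => 5 * t ^ 4 + 32 * t ^ 3 - 32 * t - 5)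
          (5 * (4 * t ^ 3) + 32 * (3 * t ^ 2) - 32 * 1 - 0) t := by
        exact ((((hasDerivAt_pow 4 t).const_mul 5).add
          ((hasDerivAt_pow 3 t).const_mul 32)).sub
          ((hasDerivAt_id t).const_mul 32)).sub (hasDerivAt_const t 5)
      convert this using 1 <;> ring
    have hDd : HasDerivAt (fun t : ℝ => t ^ 4 + 16 * t ^ 3 + 36 * t ^ 2 + 16 * t + 1)
        (4 * t ^ 3 + 48 * t ^ 2 + 72 * t + 16) t := by
      have h4 : HasDerivAt (fun t : ℝ => t ^ 4 + 16 * t ^ 3 + 36 * t ^ 2 + 16 * t + 1)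
          ((4:ℕ) * t ^ (4-1) + 16 * ((3:ℕ) * t ^ (3-1)) + 36 * ((2:ℕ) * t ^ (2-1)) + 16 * 1 + 0) t :=
        ((((hasDerivAt_pow 4 t).add ((hasDerivAt_pow 3 t).const_mul 16)).add
          ((hasDerivAt_pow 2 t).const_mul 36)).add
          ((hasDerivAt_id t).const_mul 16)).add (hasDerivAt_const t (1:ℝ))
      convert h4 using 1 <;> push_cast <;> ring
    have hq := (hN.div hDd (ne_of_gt hD)).const_mul (5 / 6 : ℝ)
    have := hlog.sub hq
    refine this.congr_deriv ?_
    have hDne : (t ^ 4 + 16 * t ^ 3 + 36 * t ^ 2 + 16 * t + 1) ≠ 0 := ne_of_gt hD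
    have htne : t ≠ 0 := ne_of_gt ht0
    field_simp
    ring
  have hmono : MonotoneOn f (Set.Ici (1:ℝ)) := by
    apply monotoneOn_of_deriv_nonneg (convex_Ici 1)
    · intro t ht
      exact (key t ht).continuousAt.continuousWithinAt
    · intro t ht
      rw [interior_Ici] at ht
      exact (key t (le_of_lt ht)).differentiableAt.differentiableWithinAt
    · intro t ht
      rw [interior_Ici] at ht
      have ht1 : (1:ℝ) ≤ t := le_of_lt ht
      rw [(key t ht1).deriv]
      have ht0 : (0:ℝ) < t := lt_of_lt_of_le one_pos ht1
      positivity
  have h1 : f 1 = 0 := by norm_num [hf]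
  have := hmono (Set.self_mem_Ici) (Set.mem_Ici.mpr hy) hy
  rw [h1] at this
  simpa [hf, sub_nonneg] using this

theorem stmt6 (θ : ℝ) (hθ : 2 < θ) (x : ℝ) (hx : 0 < x) :
    4 * (1 - 1 / θ ^ 2) * x ≤ (θ + Real.sqrt (1 + x ^ 2)) * Real.arsinh x := by
  set s : ℝ := Real.sqrt (1 + x ^ 2) with hs
  have hs2 : s ^ 2 = 1 + x ^ 2 := Real.sq_sqrt (by positivity)
  have hs1 : (1:ℝ) ≤ s := by
    nlinarith [hs2, Real.sqrt_nonneg (1 + x ^ 2)]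
  have hy1 : (1:ℝ) ≤ x + s := by linarith
  have harsinh : Real.arsinh x = Real.log (x + s) := rfl
  have hp := pade_log (x + s) hy1
  -- identity: Padé value equals x*(25*s+80)/(3*(2*s^2+16*s+17))
  have hNid : 5 * (x+s) ^ 4 + 32 * (x+s) ^ 3 - 32 * (x+s) - 5
      = 4 * x * (x+s) ^ 2 * (5 * s + 16) := by
    linear_combination (5*s^2 + 32*s - 5*x^2 + 32*x + 5) * hs2
  have hDid : (x+s) ^ 4 + 16 * (x+s) ^ 3 + 36 * (x+s) ^ 2 + 16 * (x+s) + 1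
      = 2 * (x+s) ^ 2 * (2 * s ^ 2 + 16 * s + 17) := by
    linear_combination (-3*s^2 - 4*x*s - 16*s - x^2 - 16*x - 1) * hs2
  have hy0 : (0:ℝ) < x + s := by linarith
  have hden : (0:ℝ) < 2 * s ^ 2 + 16 * s + 17 := by positivity
  have hpade : x * (25 * s + 80) / (3 * (2 * s ^ 2 + 16 * s + 17)) ≤ Real.arsinh x := by
    rw [harsinh]
    refine le_trans (le_of_eq ?_) hp
    rw [hNid, hDid]
    field_simp
    ring
  have hθ0 : (0:ℝ) < θ := by linarith
  have hθs : (0:ℝ) < θ + s := by linarith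
  calc 4 * (1 - 1 / θ ^ 2) * x
      ≤ (θ + s) * (x * (25 * s + 80) / (3 * (2 * s ^ 2 + 16 * s + 17))) := by
        have ha : (0:ℝ) ≤ θ - 2 := by linarith
        have hb : (0:ℝ) ≤ s - 1 := by linarith
        have h12 : 12 * (θ^2 - 1) * (2*s^2+16*s+17) ≤ 5 * θ^2 * ((θ+s) * (5*s+16)) := by
          nlinarith [sq_nonneg (2*(s-1) - 5*(θ-2)), sq_nonneg (θ-2),
            mul_nonneg (mul_nonneg ha hb) hb, mul_nonneg (mul_nonneg ha ha) hb,
            mul_nonneg (mul_nonneg (mul_nonneg ha ha) hb) hb,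
            mul_nonneg (mul_nonneg ha ha) ha,
            mul_nonneg (mul_nonneg (mul_nonneg ha ha) ha) hb]
        have hθ2 : (0:ℝ) < θ^2 := by positivity
        rw [mul_div_assoc', le_div_iff₀ (by positivity)]
        have g := mul_le_mul_of_nonneg_right h12 hx.le
        have e : 4 * (1 - 1/θ^2) * x = 4*(θ^2-1)*x / θ^2 := by field_simp
        rw [e, div_mul_eq_mul_div, div_le_iff₀ hθ2]
        nlinarith [g]

    _ ≤ (θ + s) * Real.arsinh x := by
        exact mul_le_mul_of_nonneg_left hpade (le_of_lt hθs)
end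

section
/- Let r > 0 and let θ > 2 be real. For every x with 0 < x ≤ r, one has (θ + √(1 + x²))·arcsinh(x) ≤ max{1 + θ, (θ + √(1 + r²))·arcsinh(r)/r}·x. -/
open Real Set

private noncomputable def Ff (θ M s : ℝ) : ℝ := M * Real.sinh s - (θ + Real.cosh s) * s
private noncomputable def Fd (θ M s : ℝ) : ℝ :=
  M * Real.cosh s - (Real.sinh s * s + (θ + Real.cosh s))
private noncomputable def Fdd (M s : ℝ) : ℝ :=
  M * Real.sinh s - (Real.cosh s * s + 2 * Real.sinh s)

private lemma hasDerivAt_Ff (θ M s : ℝ) : HasDerivAt (Ff θ M) (Fd θ M s) s := by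
  have h := ((Real.hasDerivAt_sinh s).const_mul M).sub
    (((Real.hasDerivAt_cosh s).const_add θ).mul (hasDerivAt_id s))
  refine h.congr_deriv ?_
  unfold Fd; simp only [id_eq]; ring

private lemma hasDerivAt_Fd (θ M s : ℝ) : HasDerivAt (Fd θ M) (Fdd M s) s := by
  have h := ((Real.hasDerivAt_cosh s).const_mul M).sub
    (((Real.hasDerivAt_sinh s).mul (hasDerivAt_id s)).add
      ((Real.hasDerivAt_cosh s).const_add θ))
  refine h.congr_deriv ?_
  unfold Fdd; simp only [id_eq]; ring

private lemma contFf (θ M : ℝ) : Continuous (Ff θ M) := by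
  unfold Ff; continuity

private lemma contFd (θ M : ℝ) : Continuous (Fd θ M) := by
  unfold Fd; continuity

private lemma sinh_le_mul_cosh {s : ℝ} (hs : 0 ≤ s) : Real.sinh s ≤ s * Real.cosh s := by
  have mono : MonotoneOn (fun v => v * Real.cosh v - Real.sinh v) (Icc 0 s) := by
    apply monotoneOn_of_hasDerivWithinAt_nonneg (convex_Icc 0 s)
      (f' := fun v => v * Real.sinh v)
    · fun_prop
    · intro u _
      have h := (((hasDerivAt_id u).mul (Real.hasDerivAt_cosh u)).sub
        (Real.hasDerivAt_sinh u))
      have h2 : HasDerivAt (fun v => v * Real.cosh v - Real.sinh v) (u * Real.sinh u) u := by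
        refine h.congr_deriv ?_
        simp only [id_eq]; ring
      exact h2.hasDerivWithinAt
    · intro u hu
      rw [interior_Icc] at hu
      exact mul_nonneg hu.1.le ((Real.sinh_pos_iff.mpr hu.1).le)
  have := mono (left_mem_Icc.mpr hs) (right_mem_Icc.mpr hs) hs
  simp at this
  linarith

private lemma sinh_ratio {u v : ℝ} (hu : 0 ≤ u) (huv : u ≤ v) :
    v * Real.sinh u ≤ u * Real.sinh v := by
  have mono : MonotoneOn (fun t => u * Real.sinh t - Real.sinh u * t) (Icc u v) := by
    apply monotoneOn_of_hasDerivWithinAt_nonneg (convex_Icc u v)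
      (f' := fun t => u * Real.cosh t - Real.sinh u)
    · fun_prop
    · intro s _
      have h := (((Real.hasDerivAt_sinh s).const_mul u).sub
        ((hasDerivAt_id s).const_mul (Real.sinh u)))
      have h2 : HasDerivAt (fun t => u * Real.sinh t - Real.sinh u * t)
          (u * Real.cosh s - Real.sinh u) s := by
        refine h.congr_deriv ?_
        ring
      exact h2.hasDerivWithinAt
    · intro s hs
      rw [interior_Icc] at hs
      have h1 : Real.sinh u ≤ u * Real.cosh u := sinh_le_mul_cosh hu
      have h2 : Real.cosh u ≤ Real.cosh s := by
        rw [Real.cosh_le_cosh, abs_of_nonneg hu, abs_of_nonneg (hu.trans hs.1.le)]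
        exact hs.1.le
      nlinarith
  have h5 : u * Real.sinh u - Real.sinh u * u ≤ u * Real.sinh v - Real.sinh u * v :=
    mono (left_mem_Icc.mpr huv) (right_mem_Icc.mpr huv) huv
  nlinarith [h5]

private lemma tanh_mono {a b : ℝ} (ha : 0 < a) (hab : a ≤ b) :
    a * (Real.sinh b * Real.cosh a) ≤ b * (Real.sinh a * Real.cosh b) := by
  have h := sinh_ratio (u := b - a) (v := a + b) (by linarith) (by linarith)
  rw [Real.sinh_sub, Real.sinh_add] at h
  nlinarith [h]

private lemma qstep {M : ℝ} (hM : 2 < M) {a b : ℝ} (ha : 0 < a) (hab : a ≤ b)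
    (hFa : Fdd M a ≤ 0) : Fdd M b ≤ 0 := by
  have h1 : (M - 2) * Real.sinh a ≤ a * Real.cosh a := by unfold Fdd at hFa; nlinarith
  have h2 := tanh_mono ha hab
  have hsa : 0 < Real.sinh a := Real.sinh_pos_iff.mpr ha
  have hsb : 0 < Real.sinh b := Real.sinh_pos_iff.mpr (ha.trans_le hab)
  have h3 : ((M - 2) * Real.sinh b) * Real.sinh a ≤ (b * Real.cosh b) * Real.sinh a := by
    nlinarith [mul_le_mul_of_nonneg_right h1 hsb.le]
  have h4 := le_of_mul_le_mul_right h3 hsa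
  unfold Fdd
  nlinarith

private lemma key (θ M T : ℝ) (hθ : 2 < θ) (hM1 : 1 + θ ≤ M)
    (hT : 0 < T) (hMT : (θ + Real.cosh T) * T ≤ M * Real.sinh T)
    {t : ℝ} (ht : 0 < t) (htT : t ≤ T) :
    (θ + Real.cosh t) * t ≤ M * Real.sinh t := by
  have hM2 : 2 < M := by linarith
  have hFf0 : Ff θ M 0 = 0 := by simp [Ff]
  have hFfT : 0 ≤ Ff θ M T := by unfold Ff; linarith
  suffices h : 0 ≤ Ff θ M t by unfold Ff at h; linarith
  by_cases hA : ∀ s ∈ Icc (0:ℝ) t, 0 ≤ Fd θ M s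
  · have mono : MonotoneOn (Ff θ M) (Icc 0 t) := by
      apply monotoneOn_of_hasDerivWithinAt_nonneg (convex_Icc 0 t)
        ((contFf θ M).continuousOn) (f' := Fd θ M)
      · exact fun u _ => (hasDerivAt_Ff θ M u).hasDerivWithinAt
      · intro u hu
        rw [interior_Icc] at hu
        exact hA u ⟨hu.1.le, hu.2.le⟩
    have := mono (left_mem_Icc.mpr ht.le) (right_mem_Icc.mpr ht.le) ht.le
    linarith [hFf0]
  · push_neg at hA
    obtain ⟨s₀, hs₀mem, hs₀⟩ := hA
    have hFd0 : 0 ≤ Fd θ M 0 := by simp [Fd]; linarith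
    have hs₀pos : 0 < s₀ := by
      rcases lt_or_eq_of_le hs₀mem.1 with h | h
      · exact h
      · exfalso; rw [← h] at hs₀; linarith
    obtain ⟨c, hc, hceq⟩ := exists_hasDerivAt_eq_slope (Fd θ M) (Fdd M) hs₀pos
      ((contFd θ M).continuousOn) (fun s _ => hasDerivAt_Fd θ M s)
    have hFddc : Fdd M c < 0 := by
      rw [hceq]
      apply div_neg_of_neg_of_pos _ (by linarith)
      linarith
    have hanti : AntitoneOn (Fd θ M) (Icc c T) := by
      apply antitoneOn_of_hasDerivWithinAt_nonpos (convex_Icc c T)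
        ((contFd θ M).continuousOn) (f' := Fdd M)
      · exact fun u _ => (hasDerivAt_Fd θ M u).hasDerivWithinAt
      · intro u hu
        rw [interior_Icc] at hu
        exact qstep hM2 hc.1 hu.1.le hFddc.le
    have hcT : c ≤ T := by linarith [hc.2, hs₀mem.2]
    have hs₀T : s₀ ≤ T := le_trans hs₀mem.2 htT
    have hFd_neg : ∀ u ∈ Icc t T, Fd θ M u ≤ 0 := by
      intro u hu
      have h1 : Fd θ M u ≤ Fd θ M s₀ :=
        hanti ⟨hc.2.le, hs₀T⟩ ⟨le_trans hc.2.le (le_trans hs₀mem.2 hu.1), hu.2⟩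
          (le_trans hs₀mem.2 hu.1)
      linarith
    have hFanti : AntitoneOn (Ff θ M) (Icc t T) := by
      apply antitoneOn_of_hasDerivWithinAt_nonpos (convex_Icc t T)
        ((contFf θ M).continuousOn) (f' := Fd θ M)
      · exact fun u _ => (hasDerivAt_Ff θ M u).hasDerivWithinAt
      · intro u hu
        rw [interior_Icc] at hu
        exact hFd_neg u ⟨hu.1.le, hu.2.le⟩
    have := hFanti (left_mem_Icc.mpr htT) (right_mem_Icc.mpr htT) htT
    linarith

theorem stmt7 (r : ℝ) (hr : 0 < r) (θ : ℝ) (hθ : 2 < θ)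
    (x : ℝ) (hx : 0 < x) (hxr : x ≤ r) :
    (θ + Real.sqrt (1 + x ^ 2)) * Real.arsinh x ≤
      max (1 + θ) ((θ + Real.sqrt (1 + r ^ 2)) * Real.arsinh r / r) * x := by
  set M := max (1 + θ) ((θ + Real.sqrt (1 + r ^ 2)) * Real.arsinh r / r) with hM
  have hM1 : 1 + θ ≤ M := le_max_left _ _
  have hT : 0 < Real.arsinh r := Real.arsinh_pos_iff.mpr hr
  have ht : 0 < Real.arsinh x := Real.arsinh_pos_iff.mpr hx
  have htT : Real.arsinh x ≤ Real.arsinh r := Real.arsinh_le_arsinh.mpr hxr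
  have hMT : (θ + Real.cosh (Real.arsinh r)) * Real.arsinh r ≤ M * Real.sinh (Real.arsinh r) := by
    have h := le_max_right (1 + θ) ((θ + Real.sqrt (1 + r ^ 2)) * Real.arsinh r / r)
    rw [div_le_iff₀ hr] at h
    rw [Real.cosh_arsinh, Real.sinh_arsinh]
    linarith
  have h := key θ M (Real.arsinh r) hθ hM1 hT hMT ht htT
  rw [Real.cosh_arsinh, Real.sinh_arsinh] at h
  linarith
end

section
/- For every real θ > 2 and every x > 0, one has 4·(1 − 1/θ²)·sinh(x) ≤ x·(θ + cosh(x)). -/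
private lemma hasSum_shift {f : ℕ → ℝ} {S : ℝ} (k : ℕ) (h : HasSum f S) :
    HasSum (fun n => f (n + k)) (S - ∑ i ∈ Finset.range k, f i) := by
  rw [hasSum_nat_add_iff k]
  simpa using h

private lemma nonneg_of_hasSum {f : ℕ → ℝ} {S : ℝ} (h : HasSum f S) (hf : ∀ n, 0 ≤ f n) :
    0 ≤ S := hasSum_le hf hasSum_zero h

private lemma lemP0 {x : ℝ} (hx : 0 ≤ x) : 0 ≤ 8*x + 4*x*Real.cosh x - 12*Real.sinh x := by
  have h := ((Real.hasSum_cosh x).mul_left (4*x)).sub ((Real.hasSum_sinh x).mul_left 12)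
  have h1 := hasSum_shift 1 h
  have hterm : ∀ n : ℕ, 0 ≤ 4*x*(x^(2*(n+1))/((2*(n+1)).factorial : ℝ))
      - 12*(x^(2*(n+1)+1)/((2*(n+1)+1).factorial : ℝ)) := by
    intro n
    have hF : (((2*(n+1)+1).factorial : ℕ) : ℝ) = ((2*(n+1)+1 : ℕ) : ℝ) * ((2*(n+1)).factorial : ℝ) := by
      exact_mod_cast Nat.factorial_succ (2*(n+1))
    have hFp : (0:ℝ) < ((2*(n+1)).factorial : ℝ) := by exact_mod_cast Nat.factorial_pos _
    have hN : (3:ℝ) ≤ ((2*(n+1)+1 : ℕ) : ℝ) := by exact_mod_cast Nat.succ_le_succ (by omega)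
    have hA : (0:ℝ) ≤ x^(2*(n+1)) := pow_nonneg hx _
    have key : (12:ℝ)/(((2*(n+1)+1 : ℕ) : ℝ) * ((2*(n+1)).factorial : ℝ)) ≤ 4/((2*(n+1)).factorial : ℝ) := by
      rw [div_le_div_iff₀ (by positivity) hFp]
      nlinarith [hFp, hN]
    rw [sub_nonneg, pow_succ, hF]
    calc 12*(x^(2*(n+1))*x/(((2*(n+1)+1 : ℕ):ℝ) * ((2*(n+1)).factorial : ℝ)))
        = (x^(2*(n+1))*x)*(12/(((2*(n+1)+1 : ℕ):ℝ) * ((2*(n+1)).factorial : ℝ))) := by ring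
      _ ≤ (x^(2*(n+1))*x)*(4/((2*(n+1)).factorial : ℝ)) :=
          mul_le_mul_of_nonneg_left key (mul_nonneg hA hx)
      _ = 4*x*(x^(2*(n+1))/((2*(n+1)).factorial : ℝ)) := by ring
  have h2 := nonneg_of_hasSum h1 hterm
  simp [Finset.sum_range_one] at h2
  linarith

private lemma lemP2 {x : ℝ} (hx : 0 ≤ x) : 0 ≤ x*Real.cosh x - 4*Real.sinh x + 3*x + x^3/6 := by
  have h := ((Real.hasSum_cosh x).mul_left x).sub ((Real.hasSum_sinh x).mul_left 4)
  have h1 := hasSum_shift 2 h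
  have hterm : ∀ n : ℕ, 0 ≤ x*(x^(2*(n+2))/((2*(n+2)).factorial : ℝ))
      - 4*(x^(2*(n+2)+1)/((2*(n+2)+1).factorial : ℝ)) := by
    intro n
    have hF : (((2*(n+2)+1).factorial : ℕ) : ℝ) = ((2*(n+2)+1 : ℕ) : ℝ) * ((2*(n+2)).factorial : ℝ) := by
      exact_mod_cast Nat.factorial_succ (2*(n+2))
    have hFp : (0:ℝ) < ((2*(n+2)).factorial : ℝ) := by exact_mod_cast Nat.factorial_pos _
    have hN : (5:ℝ) ≤ ((2*(n+2)+1 : ℕ) : ℝ) := by exact_mod_cast (by omega : 5 ≤ 2*(n+2)+1)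
    have hA : (0:ℝ) ≤ x^(2*(n+2)) := pow_nonneg hx _
    have key : (4:ℝ)/(((2*(n+2)+1 : ℕ) : ℝ) * ((2*(n+2)).factorial : ℝ)) ≤ 1/((2*(n+2)).factorial : ℝ) := by
      rw [div_le_div_iff₀ (by positivity) hFp]
      nlinarith [hFp, hN]
    rw [sub_nonneg, pow_succ, hF]
    calc 4*(x^(2*(n+2))*x/(((2*(n+2)+1 : ℕ):ℝ) * ((2*(n+2)).factorial : ℝ)))
        = (x^(2*(n+2))*x)*(4/(((2*(n+2)+1 : ℕ):ℝ) * ((2*(n+2)).factorial : ℝ))) := by ring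
      _ ≤ (x^(2*(n+2))*x)*(1/((2*(n+2)).factorial : ℝ)) :=
          mul_le_mul_of_nonneg_left key (mul_nonneg hA hx)
      _ = x*(x^(2*(n+2))/((2*(n+2)).factorial : ℝ)) := by ring
  have h2 := nonneg_of_hasSum h1 hterm
  simp [Finset.sum_range_succ, Finset.sum_range_one] at h2
  norm_num [Nat.factorial] at h2
  linarith

private lemma coefK_nonneg (n : ℕ) :
    (0:ℝ) ≤ 2*(2*((n:ℝ)+1)+2)*(2*((n:ℝ)+1)+1) + ((2:ℝ)^(2*(n+1)) - 2)*(2*((n:ℝ)+1)+2) - 2^(2*(n+1)+3) := by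
  match n with
  | 0 => norm_num
  | 1 => norm_num
  | (k+2) =>
    have e1 : 2*(k+2+1) = 2*k+6 := by omega
    rw [e1]
    have h1 : (0:ℝ) ≤ (2:ℝ)^(2*k+6) := by positivity
    have h8 : ((2:ℝ))^(2*k+6+3) = 2^(2*k+6)*8 := by rw [pow_add]; norm_num
    rw [h8]
    have hk : (0:ℝ) ≤ (k:ℝ) := Nat.cast_nonneg k
    push_cast
    nlinarith [mul_nonneg h1 hk, hk, h1]

private lemma lemG {x : ℝ} (hx : 0 ≤ x) :
    0 ≤ 3*x^2 + 2*x^2*Real.cosh x + x*Real.cosh x*Real.sinh x - 2*x*Real.sinh x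
      - 4*Real.sinh x^2 := by
  have hA := (Real.hasSum_cosh x).mul_left (2*x^2)
  have hB := (Real.hasSum_sinh (2*x)).mul_left (x/2)
  have hC := (Real.hasSum_sinh x).mul_left (2*x)
  have hD := (Real.hasSum_cosh (2*x)).mul_left 2
  have hD1 := hasSum_shift 1 hD
  have hE := ((hA.add hB).sub hC).sub hD1
  have hE1 := hasSum_shift 1 hE
  have hterm : ∀ n : ℕ, 0 ≤ (2*x^2*(x^(2*(n+1))/((2*(n+1)).factorial : ℝ))
        + x/2*((2*x)^(2*(n+1)+1)/((2*(n+1)+1).factorial : ℝ))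
        - 2*x*(x^(2*(n+1)+1)/((2*(n+1)+1).factorial : ℝ))
        - 2*((2*x)^(2*(n+1+1))/((2*(n+1+1)).factorial : ℝ))) := by
    intro n
    have hF3 : (((2*(n+1)+1).factorial : ℕ) : ℝ)
        = (2*((n:ℝ)+1)+1) * ((2*(n+1)).factorial : ℝ) := by
      have := Nat.factorial_succ (2*(n+1))
      push_cast [this]
      ring
    have hidx : 2*(n+1+1) = (2*(n+1)+1)+1 := by omega
    have hF4 : (((2*(n+1+1)).factorial : ℕ) : ℝ)
        = (2*((n:ℝ)+1)+2) * ((2*(n+1)+1).factorial : ℝ) := by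
      rw [hidx]
      have := Nat.factorial_succ (2*(n+1)+1)
      push_cast [this]
      ring
    have hFp : (0:ℝ) < ((2*(n+1)).factorial : ℝ) := by exact_mod_cast Nat.factorial_pos _
    have heq : 2*x^2*(x^(2*(n+1))/((2*(n+1)).factorial : ℝ))
        + x/2*((2*x)^(2*(n+1)+1)/((2*(n+1)+1).factorial : ℝ))
        - 2*x*(x^(2*(n+1)+1)/((2*(n+1)+1).factorial : ℝ))
        - 2*((2*x)^(2*(n+1+1))/((2*(n+1+1)).factorial : ℝ))
        = x^(2*(n+1))*x^2*
          ((2*(2*((n:ℝ)+1)+2)*(2*((n:ℝ)+1)+1) + ((2:ℝ)^(2*(n+1)) - 2)*(2*((n:ℝ)+1)+2)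
              - 2^(2*(n+1)+3))
            / ((2*((n:ℝ)+1)+2)*((2*((n:ℝ)+1)+1)*((2*(n+1)).factorial : ℝ)))) := by
      have e1 : (2*x)^(2*(n+1)+1) = 2^(2*(n+1)+1)*x^(2*(n+1)+1) := mul_pow 2 x (2*(n+1)+1)
      have e2 : (2*x)^(2*(n+1+1)) = 2^(2*(n+1+1))*x^(2*(n+1+1)) := mul_pow 2 x (2*(n+1+1))
      rw [e1, e2, hF4, hF3]
      field_simp
      rw [hidx]
      ring
    rw [heq]
    have hnum := coefK_nonneg n
    have hden : (0:ℝ) < (2*((n:ℝ)+1)+2)*((2*((n:ℝ)+1)+1)*((2*(n+1)).factorial : ℝ)) := by positivity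
    exact mul_nonneg (mul_nonneg (pow_nonneg hx _) (sq_nonneg x)) (div_nonneg hnum hden.le)
  have h2 := nonneg_of_hasSum hE1 hterm
  simp only [Finset.sum_range_one] at h2
  norm_num [Nat.factorial] at h2
  rw [Real.sinh_two_mul, Real.cosh_two_mul, Real.cosh_sq] at h2
  nlinarith [h2]

theorem stmt9 (θ : ℝ) (hθ : 2 < θ) (x : ℝ) (hx : 0 < x) :
    4 * (1 - 1 / θ ^ 2) * Real.sinh x ≤ x * (θ + Real.cosh x) := by
  have hs : 0 < Real.sinh x := Real.sinh_pos_iff.mpr hx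
  have hc : 1 ≤ Real.cosh x := Real.one_le_cosh x
  have hsc : Real.sinh x < Real.cosh x := by
    nlinarith [Real.cosh_sq_sub_sinh_sq x, hc, hs]
  have key : 4*(θ^2 - 1)*Real.sinh x ≤ x*θ^3 + x*Real.cosh x*θ^2 := by
    rcases le_or_gt (4*Real.sinh x) (2*x + x*Real.cosh x) with hcase | hcase
    · nlinarith [mul_nonneg (mul_nonneg hx.le (by linarith : (0:ℝ) ≤ θ - 2)) (sq_nonneg θ),
        mul_nonneg (by linarith : (0:ℝ) ≤ 2*x + x*Real.cosh x - 4*Real.sinh x) (sq_nonneg θ), hs]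
    · have hx4 : x < 4 := by nlinarith [hsc, hc, hx]
      have hP0 := lemP0 hx.le
      have hS2 := lemP2 hx.le
      have hG := lemG hx.le
      have hP2 : 0 < 6*x + x*Real.cosh x - 4*Real.sinh x := by
        nlinarith [hS2, mul_pos (by linarith : (0:ℝ) < 4 - x) hx,
          mul_nonneg (by linarith : (0:ℝ) ≤ 4 - x) (sq_nonneg x)]
      have ht : 0 < θ - 2 := by linarith
      nlinarith [sq_nonneg (4*(3*x + x*Real.cosh x - 4*Real.sinh x)
          + 2*(6*x + x*Real.cosh x - 4*Real.sinh x)*(θ - 2)),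
        hG, hP0, hP2, mul_pos (mul_pos hx hP2) (pow_pos ht 3),
        mul_pos hP2 (pow_pos ht 2), ht]
  have hθ2 : (0:ℝ) < θ^2 := by positivity
  have h4 : 4*(1 - 1/θ^2)*Real.sinh x = (4*(θ^2 - 1)*Real.sinh x)/θ^2 := by
    field_simp
  rw [h4, div_le_iff₀ hθ2]
  nlinarith [key]
end

section
/- Let r > 0 and let θ ≤ 2 be real. For every x with 0 < x ≤ arcsinh(r), one has x·(θ + cosh(x)) ≤ ((θ + √(1 + r²))·arcsinh(r)/r)·sinh(x). -/
open Real

lemma lemA_s10 (y : ℝ) (hy : 0 ≤ y) : Real.sinh y ≤ y * Real.cosh y := by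
  have key : ∀ t : ℝ, HasDerivAt (fun t => t * Real.cosh t - Real.sinh t)
      (t * Real.sinh t) t := by
    intro t
    have h := ((hasDerivAt_id t).mul (Real.hasDerivAt_cosh t)).sub (Real.hasDerivAt_sinh t)
    exact h.congr_deriv (by simp [id_eq])
  have mono : MonotoneOn (fun t => t * Real.cosh t - Real.sinh t) (Set.Ici 0) := by
    apply monotoneOn_of_deriv_nonneg (convex_Ici 0)
    · exact (Continuous.continuousOn (by continuity))
    · intro t _; exact (key t).differentiableAt.differentiableWithinAt
    · intro t ht
      rw [interior_Ici] at ht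
      rw [(key t).deriv]
      have ht' : 0 < t := ht
      exact mul_nonneg ht'.le (by rw [← Real.sinh_zero]; exact (Real.sinh_le_sinh.mpr ht'.le))
  have h0 := mono (Set.self_mem_Ici) (Set.mem_Ici.mpr hy) hy
  simp at h0
  linarith

lemma lemB_s10 (y : ℝ) (hy : 0 ≤ y) :
    2 * (y * Real.cosh y) + y ≤ Real.sinh y * Real.cosh y + 2 * Real.sinh y := by
  set f : ℝ → ℝ := fun t => Real.sinh t * Real.cosh t + 2 * Real.sinh t - t - 2 * (t * Real.cosh t) with hf
  have key : ∀ t : ℝ, HasDerivAt f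
      (Real.cosh t * Real.cosh t + Real.sinh t * Real.sinh t + 2 * Real.cosh t - 1
        - 2 * (1 * Real.cosh t + t * Real.sinh t)) t := by
    intro t
    exact ((((Real.hasDerivAt_sinh t).mul (Real.hasDerivAt_cosh t)).add
      ((Real.hasDerivAt_sinh t).const_mul 2)).sub (hasDerivAt_id t)).sub
      (((hasDerivAt_id t).mul (Real.hasDerivAt_cosh t)).const_mul 2)
  have mono : MonotoneOn f (Set.Ici 0) := by
    apply monotoneOn_of_deriv_nonneg (convex_Ici 0)
    · exact (Continuous.continuousOn (by fun_prop))
    · intro t _; exact (key t).differentiableAt.differentiableWithinAt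
    · intro t ht
      rw [interior_Ici] at ht
      rw [(key t).deriv]
      have ht' : (0:ℝ) < t := ht
      have hs : 0 < Real.sinh t := Real.sinh_pos_iff.mpr ht'
      have hst : t < Real.sinh t := Real.self_lt_sinh_iff.mpr ht'
      have hid := Real.cosh_sq_sub_sinh_sq t
      nlinarith [hs, hst]
  have h0 := mono (Set.self_mem_Ici) (Set.mem_Ici.mpr hy) hy
  simp [hf] at h0
  linarith

theorem stmt10 (r : ℝ) (hr : 0 < r) (θ : ℝ) (hθ : θ ≤ 2)
    (x : ℝ) (hx : 0 < x) (hxr : x ≤ Real.arsinh r) :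
    x * (θ + Real.cosh x) ≤
      ((θ + Real.sqrt (1 + r ^ 2)) * Real.arsinh r / r) * Real.sinh x := by
  set R := Real.arsinh r with hR
  have hsR : Real.sinh R = r := Real.sinh_arsinh r
  have hcR : Real.cosh R = Real.sqrt (1 + r ^ 2) := Real.cosh_arsinh r
  set g : ℝ → ℝ := fun t => t * (θ + Real.cosh t) / Real.sinh t with hg
  have key : ∀ t : ℝ, 0 < t → HasDerivAt g
      (((1 * (θ + Real.cosh t) + t * Real.sinh t) * Real.sinh t
        - t * (θ + Real.cosh t) * Real.cosh t) / (Real.sinh t ^ 2)) t := by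
    intro t ht
    have hs : Real.sinh t ≠ 0 := ne_of_gt (Real.sinh_pos_iff.mpr ht)
    exact ((hasDerivAt_id t).mul ((hasDerivAt_const t θ).add (Real.hasDerivAt_cosh t))).div
      (Real.hasDerivAt_sinh t) hs |>.congr_deriv (by simp only [id_eq, Pi.add_apply, Pi.mul_apply]; ring_nf)
  have mono : MonotoneOn g (Set.Icc x R) := by
    apply monotoneOn_of_deriv_nonneg (convex_Icc x R)
    · apply ContinuousOn.div
      · fun_prop
      · fun_prop
      · intro t ht
        exact ne_of_gt (Real.sinh_pos_iff.mpr (lt_of_lt_of_le hx ht.1))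
    · intro t ht
      rw [interior_Icc] at ht
      exact (key t (hx.trans ht.1)).differentiableAt.differentiableWithinAt
    · intro t ht
      rw [interior_Icc] at ht
      have ht' : 0 < t := hx.trans ht.1
      rw [(key t ht').deriv]
      apply div_nonneg _ (sq_nonneg _)
      have hA := lemA_s10 t ht'.le
      have hB := lemB_s10 t ht'.le
      have hid := Real.cosh_sq_sub_sinh_sq t
      nlinarith [mul_nonneg (sub_nonneg.mpr hθ) (sub_nonneg.mpr hA)]
    
  have hgle : g x ≤ g R := mono (Set.mem_Icc.mpr ⟨le_refl x, hxr⟩)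
      (Set.mem_Icc.mpr ⟨hxr, le_refl R⟩) hxr
  have hsx : 0 < Real.sinh x := Real.sinh_pos_iff.mpr hx
  rw [hg] at hgle
  simp only [hsR, hcR] at hgle
  have := (div_le_div_iff₀ hsx hr).mp hgle
  rw [div_mul_eq_mul_div, le_div_iff₀ hr]
  nlinarith [this]
end

section
/- Let r > 0 and let θ > 2 be real. For every x with 0 < x ≤ arcsinh(r), one has x·(θ + cosh(x)) ≤ max{1 + θ, (θ + √(1 + r²))·arcsinh(r)/r}·sinh(x). -/
open Real Set

private lemma mono_aux {f f' : ℝ → ℝ} (hf : ∀ y, HasDerivAt f (f' y) y) {a c : ℝ}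
    (h : ∀ y ∈ Set.Ioo a c, 0 ≤ f' y) : MonotoneOn f (Set.Icc a c) := by
  apply monotoneOn_of_deriv_nonneg (convex_Icc a c)
  · exact fun y _ => (hf y).differentiableAt.continuousAt.continuousWithinAt
  · exact fun y _ => (hf y).differentiableAt.differentiableWithinAt
  · intro y hy
    rw [interior_Icc] at hy
    rw [(hf y).deriv]
    exact h y hy

private lemma anti_aux {f f' : ℝ → ℝ} (hf : ∀ y, HasDerivAt f (f' y) y) {a c : ℝ}
    (h : ∀ y ∈ Set.Ioo a c, f' y ≤ 0) : AntitoneOn f (Set.Icc a c) := by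
  apply antitoneOn_of_deriv_nonpos (convex_Icc a c)
  · exact fun y _ => (hf y).differentiableAt.continuousAt.continuousWithinAt
  · exact fun y _ => (hf y).differentiableAt.differentiableWithinAt
  · intro y hy
    rw [interior_Icc] at hy
    rw [(hf y).deriv]
    exact h y hy

/-- `t ↦ t * coth t` is monotone on positive reals, in cross-multiplied form. -/
private lemma coth_mul_mono {s t : ℝ} (hs : 0 < s) (hst : s ≤ t) :
    s * Real.cosh s * Real.sinh t ≤ t * Real.cosh t * Real.sinh s := by
  have ht : 0 < t := lt_of_lt_of_le hs hst
  have hd : ∀ u : ℝ, 0 < u → HasDerivAt (fun v => v * Real.cosh v / Real.sinh v)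
      (((1 * Real.cosh u + u * Real.sinh u) * Real.sinh u - u * Real.cosh u * Real.cosh u) /
        Real.sinh u ^ 2) u := by
    intro u hu
    exact ((hasDerivAt_id u).mul (Real.hasDerivAt_cosh u)).div (Real.hasDerivAt_sinh u)
      (ne_of_gt (Real.sinh_pos_iff.2 hu))
  have key : MonotoneOn (fun v : ℝ => v * Real.cosh v / Real.sinh v) (Set.Ioi 0) := by
    apply monotoneOn_of_deriv_nonneg (convex_Ioi 0)
    · exact ContinuousOn.div ((continuous_id.mul Real.continuous_cosh).continuousOn)
        Real.continuous_sinh.continuousOn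
        (fun u hu => ne_of_gt (Real.sinh_pos_iff.2 hu))
    · rw [interior_Ioi]
      exact fun u hu => (hd u hu).differentiableAt.differentiableWithinAt
    · rw [interior_Ioi]
      intro u hu
      rw [(hd u hu).deriv]
      apply div_nonneg _ (sq_nonneg _)
      have h1 : u ≤ Real.sinh u := Real.self_le_sinh_iff.2 (le_of_lt hu)
      have h2 : (1 : ℝ) ≤ Real.cosh u := Real.one_le_cosh u
      have h3 : Real.cosh u ^ 2 = Real.sinh u ^ 2 + 1 := Real.cosh_sq u
      nlinarith [(Set.mem_Ioi.1 hu).le]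
  have := key (Set.mem_Ioi.2 hs) (Set.mem_Ioi.2 ht) hst
  rw [div_le_div_iff₀ (Real.sinh_pos_iff.2 hs) (Real.sinh_pos_iff.2 ht)] at this
  linarith

private lemma hasDerivF (M θ : ℝ) (y : ℝ) :
    HasDerivAt (fun y => M * Real.sinh y - y * (θ + Real.cosh y))
      (M * Real.cosh y - (θ + Real.cosh y + y * Real.sinh y)) y := by
  have h1 := (Real.hasDerivAt_sinh y).const_mul M
  have h2 := (hasDerivAt_id y).mul ((hasDerivAt_const y θ).add (Real.hasDerivAt_cosh y))
  have h3 := h1.sub h2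
  refine h3.congr_deriv ?_
  simp only [Pi.add_apply, id_eq]
  ring

private lemma hasDerivF' (M θ : ℝ) (y : ℝ) :
    HasDerivAt (fun y => M * Real.cosh y - (θ + Real.cosh y + y * Real.sinh y))
      ((M - 2) * Real.sinh y - y * Real.cosh y) y := by
  have h1 := (Real.hasDerivAt_cosh y).const_mul M
  have h2 := ((hasDerivAt_const y θ).add (Real.hasDerivAt_cosh y)).add
      ((hasDerivAt_id y).mul (Real.hasDerivAt_sinh y))
  have h3 := h1.sub h2
  refine h3.congr_deriv ?_
  simp only [Pi.add_apply, id_eq]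
  ring

private lemma main_aux (M θ b x : ℝ) (hθ : 2 < θ) (hM1 : 1 + θ ≤ M) (hx : 0 < x) (hxb : x ≤ b)
    (hFb : b * (θ + Real.cosh b) ≤ M * Real.sinh b) :
    x * (θ + Real.cosh x) ≤ M * Real.sinh x := by
  set F : ℝ → ℝ := fun y => M * Real.sinh y - y * (θ + Real.cosh y) with hFdef
  set F' : ℝ → ℝ := fun y => M * Real.cosh y - (θ + Real.cosh y + y * Real.sinh y) with hF'def
  have hF : ∀ y, HasDerivAt F (F' y) y := fun y => hasDerivF M θ y
  have hF' : ∀ y, HasDerivAt F' ((M - 2) * Real.sinh y - y * Real.cosh y) y :=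
    fun y => hasDerivF' M θ y
  have hF0 : F 0 = 0 := by simp [hFdef]
  have hF'0 : 0 ≤ F' 0 := by
    simp only [hF'def, Real.cosh_zero, Real.sinh_zero, mul_one, mul_zero, zero_mul]
    linarith
  have hsx : 0 < Real.sinh x := Real.sinh_pos_iff.2 hx
  suffices h : 0 ≤ F x by
    simp only [hFdef] at h
    linarith
  by_cases hA : x * Real.cosh x ≤ (M - 2) * Real.sinh x
  · -- F'' ≥ 0 on (0, x), so F' ≥ F'(0) ≥ 0 there, so F monotone
    have h1 : ∀ y ∈ Set.Ioo 0 x, 0 ≤ (M - 2) * Real.sinh y - y * Real.cosh y := by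
      intro y hy
      have hsy : 0 < Real.sinh y := Real.sinh_pos_iff.2 hy.1
      have hL := coth_mul_mono hy.1 hy.2.le
      have h3 := mul_le_mul_of_nonneg_right hA hsy.le
      have h4 : y * Real.cosh y * Real.sinh x ≤ ((M - 2) * Real.sinh y) * Real.sinh x := by
        nlinarith
      nlinarith
    have monoF' : MonotoneOn F' (Set.Icc 0 x) := mono_aux hF' h1
    have h2 : ∀ y ∈ Set.Ioo 0 x, 0 ≤ F' y := by
      intro y hy
      exact le_trans hF'0 (monoF' ⟨le_rfl, hx.le⟩ ⟨hy.1.le, hy.2.le⟩ hy.1.le)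
    have monoF : MonotoneOn F (Set.Icc 0 x) := mono_aux hF h2
    have := monoF ⟨le_rfl, hx.le⟩ ⟨hx.le, le_rfl⟩ hx.le
    linarith [hF0]
  · push_neg at hA
    by_cases hB : F' x ≤ 0
    · -- F'' ≤ 0 on (x, b), F' ≤ F' x ≤ 0, F antitone on [x,b], F x ≥ F b ≥ 0
      have h1 : ∀ y ∈ Set.Ioo x b, (M - 2) * Real.sinh y - y * Real.cosh y ≤ 0 := by
        intro y hy
        have hsy : 0 < Real.sinh y := Real.sinh_pos_iff.2 (lt_trans hx hy.1)
        have hL := coth_mul_mono hx hy.1.le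
        have h3 := mul_lt_mul_of_pos_right hA hsy
        nlinarith
      have antiF' : AntitoneOn F' (Set.Icc x b) := anti_aux hF' h1
      have h2 : ∀ y ∈ Set.Ioo x b, F' y ≤ 0 := by
        intro y hy
        exact le_trans (antiF' ⟨le_rfl, hxb⟩ ⟨hy.1.le, hy.2.le⟩ hy.1.le) hB
      have antiF : AntitoneOn F (Set.Icc x b) := anti_aux hF h2
      have := antiF ⟨le_rfl, hxb⟩ ⟨hxb, le_rfl⟩ hxb
      have hFbpos : 0 ≤ F b := by simp only [hFdef]; linarith
      linarith
    · push_neg at hB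
      -- F' x > 0; take c = sup of the set where F'' ≥ 0
      set S : Set ℝ := {t : ℝ | t ≤ x ∧ t * Real.cosh t ≤ (M - 2) * Real.sinh t} with hSdef
      have hS0 : (0 : ℝ) ∈ S := by
        constructor
        · exact hx.le
        · simp
      have hSbdd : BddAbove S := ⟨x, fun t ht => ht.1⟩
      set c := sSup S with hcdef
      have hc0 : 0 ≤ c := le_csSup hSbdd hS0
      have hcx : c ≤ x := csSup_le ⟨0, hS0⟩ fun t ht => ht.1
      have claim1 : ∀ y ∈ Set.Ioo 0 c, 0 ≤ (M - 2) * Real.sinh y - y * Real.cosh y := by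
        intro y hy
        by_contra hcon
        push_neg at hcon
        have hsy : 0 < Real.sinh y := Real.sinh_pos_iff.2 hy.1
        have h' : (M - 2) * Real.sinh y < y * Real.cosh y := by linarith
        have hub : ∀ t ∈ S, t ≤ y := by
          intro t ht
          by_contra hty
          push_neg at hty
          have hst : 0 < Real.sinh t := Real.sinh_pos_iff.2 (lt_trans hy.1 hty)
          have hL := coth_mul_mono hy.1 hty.le
          have e1 := mul_le_mul_of_nonneg_right ht.2 hsy.le
          have e2 := mul_lt_mul_of_pos_right h' hst
          nlinarith
        have := csSup_le ⟨0, hS0⟩ hub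
        linarith [hy.2]
      have claim2 : ∀ y ∈ Set.Ioo c x, (M - 2) * Real.sinh y - y * Real.cosh y ≤ 0 := by
        intro y hy
        by_contra hcon
        push_neg at hcon
        have hyS : y ∈ S := ⟨hy.2.le, by linarith⟩
        linarith [le_csSup hSbdd hyS, hy.1]
      have monoF'1 : MonotoneOn F' (Set.Icc 0 c) := mono_aux hF' claim1
      have antiF'2 : AntitoneOn F' (Set.Icc c x) := anti_aux hF' claim2
      have h2 : ∀ y ∈ Set.Ioo 0 x, 0 ≤ F' y := by
        intro y hy
        rcases le_or_gt y c with h | h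
        · exact le_trans hF'0 (monoF'1 ⟨le_rfl, hc0⟩ ⟨hy.1.le, h⟩ hy.1.le)
        · have := antiF'2 ⟨h.le, hy.2.le⟩ ⟨hcx, le_rfl⟩ hy.2.le
          linarith
      have monoF : MonotoneOn F (Set.Icc 0 x) := mono_aux hF h2
      have := monoF ⟨le_rfl, hx.le⟩ ⟨hx.le, le_rfl⟩ hx.le
      linarith [hF0]

theorem stmt11 (r : ℝ) (hr : 0 < r) (θ : ℝ) (hθ : 2 < θ)
    (x : ℝ) (hx : 0 < x) (hxr : x ≤ Real.arsinh r) :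
    x * (θ + Real.cosh x) ≤
      max (1 + θ) ((θ + Real.sqrt (1 + r ^ 2)) * Real.arsinh r / r) * Real.sinh x := by
  set M := max (1 + θ) ((θ + Real.sqrt (1 + r ^ 2)) * Real.arsinh r / r) with hMdef
  have hM1 : 1 + θ ≤ M := le_max_left _ _
  have hM2 : (θ + Real.sqrt (1 + r ^ 2)) * Real.arsinh r / r ≤ M := le_max_right _ _
  have hFb : Real.arsinh r * (θ + Real.cosh (Real.arsinh r)) ≤ M * Real.sinh (Real.arsinh r) := by
    rw [Real.cosh_arsinh, Real.sinh_arsinh]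
    have := (div_le_iff₀ hr).1 hM2
    nlinarith
  exact main_aux M θ (Real.arsinh r) x hθ hM1 hx hxr hFb
end

section
/- Let r > 0 and let a ≥ 0 be real. The inequality (a + 1)·x/(a + √(1 + x²)) ≤ arcsinh(x) holds for all x with 0 ≤ x ≤ r if and only if a ≤ 2. -/
lemma stmt12_aux (a : ℝ) (ha : 0 ≤ a) (x : ℝ) :
    HasDerivAt (fun x => Real.arsinh x - (a + 1) * x / (a + Real.sqrt (1 + x ^ 2)))
      ((Real.sqrt (1 + x ^ 2) - 1) * (Real.sqrt (1 + x ^ 2) + 1 + a - a ^ 2) /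
        (Real.sqrt (1 + x ^ 2) * (a + Real.sqrt (1 + x ^ 2)) ^ 2)) x := by
  have h1 : (0:ℝ) < 1 + x ^ 2 := by positivity
  set s := Real.sqrt (1 + x ^ 2) with hs
  have hs1 : 1 ≤ s := by
    nlinarith [Real.sq_sqrt h1.le, Real.sqrt_nonneg (1 + x ^ 2)]
  have hs0 : 0 < s := lt_of_lt_of_le one_pos hs1
  have hssq : s ^ 2 = 1 + x ^ 2 := Real.sq_sqrt h1.le
  have hden : 0 < a + s := by linarith
  have hinner : HasDerivAt (fun x : ℝ => 1 + x ^ 2) (2 * x) x := by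
    simpa using ((hasDerivAt_pow 2 x).const_add 1)
  have hsqrt : HasDerivAt (fun x : ℝ => Real.sqrt (1 + x ^ 2)) (x / s) x := by
    have := (Real.hasDerivAt_sqrt h1.ne').comp x hinner
    refine this.congr_deriv (Eq.symm ?_)
    field_simp
    ring
  have hg : HasDerivAt (fun x : ℝ => (a + 1) * x / (a + Real.sqrt (1 + x ^ 2)))
      (((a + 1) * (a + s) - (a + 1) * x * (x / s)) / (a + s) ^ 2) x := by
    have hnum : HasDerivAt (fun x : ℝ => (a + 1) * x) (a + 1) x := by
      simpa using (hasDerivAt_id x).const_mul (a + 1)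
    have hd : HasDerivAt (fun x : ℝ => a + Real.sqrt (1 + x ^ 2)) (x / s) x :=
      hsqrt.const_add a
    exact hnum.div hd hden.ne'
  have harsinh : HasDerivAt Real.arsinh (Real.sqrt (1 + x ^ 2))⁻¹ x :=
    Real.hasDerivAt_arsinh x
  have := harsinh.sub hg
  refine this.congr_deriv (Eq.symm ?_)
  rw [← hs]
  field_simp
  nlinarith [hssq, sq_nonneg (a + s), sq_nonneg s]

theorem stmt12 (r : ℝ) (hr : 0 < r) (a : ℝ) (ha : 0 ≤ a) :
    (∀ x : ℝ, 0 ≤ x → x ≤ r →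
      (a + 1) * x / (a + Real.sqrt (1 + x ^ 2)) ≤ Real.arsinh x) ↔ a ≤ 2 := by
  set f := fun x => Real.arsinh x - (a + 1) * x / (a + Real.sqrt (1 + x ^ 2)) with hf
  have hdiff : Differentiable ℝ f := fun x => (stmt12_aux a ha x).differentiableAt
  have hf0 : f 0 = 0 := by simp [hf]
  constructor
  · intro h
    by_contra hle
    push_neg at hle
    set c := a ^ 2 - a - 1 with hc
    have hc1 : 1 < c := by nlinarith
    have hsc : 0 < Real.sqrt (c ^ 2 - 1) := Real.sqrt_pos.mpr (by nlinarith)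
    set t := min r (Real.sqrt (c ^ 2 - 1)) / 2 with ht
    have ht0 : 0 < t := by
      have := lt_min hr hsc
      positivity
    have htr : t ≤ r := by
      have := min_le_left r (Real.sqrt (c ^ 2 - 1))
      linarith
    have ht2 : t ^ 2 < c ^ 2 - 1 := by
      have h1 : t ≤ Real.sqrt (c ^ 2 - 1) / 2 := by
        have := min_le_right r (Real.sqrt (c ^ 2 - 1))
        rw [ht]; linarith
      have h2 : t ^ 2 ≤ (Real.sqrt (c ^ 2 - 1)) ^ 2 / 4 := by nlinarith
      have h3 : (Real.sqrt (c ^ 2 - 1)) ^ 2 = c ^ 2 - 1 := Real.sq_sqrt (by nlinarith)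
      nlinarith
    have hanti : StrictAntiOn f (Set.Icc 0 t) := by
      apply strictAntiOn_of_deriv_neg (convex_Icc 0 t) hdiff.continuous.continuousOn
      intro y hy
      rw [interior_Icc] at hy
      rw [(stmt12_aux a ha y).deriv]
      have hy1 : (0:ℝ) < 1 + y ^ 2 := by positivity
      have hsy1 : 1 < Real.sqrt (1 + y ^ 2) := by
        nlinarith [Real.sq_sqrt hy1.le, Real.sqrt_nonneg (1 + y ^ 2), hy.1]
      have hsyc : Real.sqrt (1 + y ^ 2) < c := by
        have : Real.sqrt (1 + y ^ 2) < Real.sqrt (c ^ 2) :=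
          Real.sqrt_lt_sqrt hy1.le (by nlinarith [hy.1, hy.2, sq_nonneg y, sq_nonneg t])
        rwa [Real.sqrt_sq (by linarith)] at this
      apply div_neg_of_neg_of_pos
      · nlinarith
      · positivity
    have hft : f t < 0 := by
      have := hanti (Set.left_mem_Icc.mpr ht0.le) (Set.right_mem_Icc.mpr ht0.le) ht0
      rwa [hf0] at this
    have := h t ht0.le htr
    rw [hf] at hft
    simp only at hft
    linarith
  · intro ha2 x hx0 _
    have hmono : MonotoneOn f (Set.Ici 0) := by
      apply monotoneOn_of_deriv_nonneg (convex_Ici 0) hdiff.continuous.continuousOn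
        (hdiff.differentiableOn)
      intro y _
      rw [(stmt12_aux a ha y).deriv]
      have hy1 : (0:ℝ) < 1 + y ^ 2 := by positivity
      have hsy1 : 1 ≤ Real.sqrt (1 + y ^ 2) := by
        nlinarith [Real.sq_sqrt hy1.le, Real.sqrt_nonneg (1 + y ^ 2)]
      have h2a : 0 ≤ 2 + a - a ^ 2 := by nlinarith [mul_nonneg (by linarith : (0:ℝ) ≤ 2 - a) (by linarith : (0:ℝ) ≤ 1 + a)]
      apply div_nonneg
      · exact mul_nonneg (by linarith) (by linarith)
      · positivity
    have := hmono Set.self_mem_Ici (Set.mem_Ici.mpr hx0) hx0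
    rw [hf0] at this
    rw [hf] at this
    simp only at this
    linarith
end

section
/- Let r > 0 and let b ≥ 0 be real. The inequality arcsinh(x) ≤ (b + 1)·x/(b + √(1 + x²)) holds for all x with 0 ≤ x ≤ r if and only if b ≥ (√(1 + r²)·arcsinh(r) − r)/(r − arcsinh(r)). -/
open Real Set

private noncomputable def NN (t : ℝ) : ℝ := t * Real.cosh t - Real.sinh t
private noncomputable def DD (t : ℝ) : ℝ := Real.sinh t - t

private lemma nonneg_of_hasDerivAt (f f' : ℝ → ℝ)
    (hd : ∀ t, HasDerivAt f (f' t) t) (h0 : f 0 = 0)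
    (hf' : ∀ t, 0 ≤ t → 0 ≤ f' t) : ∀ t, 0 ≤ t → 0 ≤ f t := by
  intro t ht
  have hmono : MonotoneOn f (Set.Ici (0:ℝ)) := by
    apply monotoneOn_of_deriv_nonneg (convex_Ici 0)
    · exact fun x _ => (hd x).continuousAt.continuousWithinAt
    · exact fun x _ => ((hd x).differentiableAt).differentiableWithinAt
    · intro x hx
      rw [(hd x).deriv]
      rw [interior_Ici] at hx
      exact hf' x (le_of_lt hx)
  have h2 := hmono Set.self_mem_Ici (Set.mem_Ici.2 ht) ht
  rw [h0] at h2
  exact h2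

private lemma sq_le_exp (t : ℝ) (ht : 0 ≤ t) : t ^ 2 ≤ Real.exp t := by
  have h := Real.sum_le_exp_of_nonneg ht 4
  norm_num [Finset.sum_range_succ, Nat.factorial] at h
  nlinarith [mul_nonneg ht (sq_nonneg (t - 3/2))]

private lemma p0_nonneg : ∀ t : ℝ, 0 ≤ t →
    0 ≤ t * Real.cosh t - t - t^2 * Real.sinh t + Real.sinh t * Real.cosh t - Real.sinh t := by
  -- chain of derivatives
  set p7 : ℝ → ℝ := fun t => 64*(Real.cosh t)^2 + 64*(Real.sinh t)^2 - 36*Real.cosh t - 13*t*Real.sinh t - t^2*Real.cosh t with hp7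
  set p6 : ℝ → ℝ := fun t => 64*Real.sinh t*Real.cosh t - 25*Real.sinh t - 11*t*Real.cosh t - t^2*Real.sinh t with hp6
  set p5 : ℝ → ℝ := fun t => 16*(Real.cosh t)^2 + 16*(Real.sinh t)^2 - 16*Real.cosh t - 9*t*Real.sinh t - t^2*Real.cosh t with hp5
  set p4 : ℝ → ℝ := fun t => 16*Real.sinh t*Real.cosh t - 9*Real.sinh t - 7*t*Real.cosh t - t^2*Real.sinh t with hp4
  set p3 : ℝ → ℝ := fun t => 4*(Real.cosh t)^2 + 4*(Real.sinh t)^2 - 4*Real.cosh t - 5*t*Real.sinh t - t^2*Real.cosh t with hp3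
  set p2 : ℝ → ℝ := fun t => 4*Real.sinh t*Real.cosh t - Real.sinh t - 3*t*Real.cosh t - t^2*Real.sinh t with hp2
  set p1 : ℝ → ℝ := fun t => (Real.cosh t)^2 + (Real.sinh t)^2 - 1 - t*Real.sinh t - t^2*Real.cosh t with hp1
  set p0 : ℝ → ℝ := fun t => t * Real.cosh t - t - t^2 * Real.sinh t + Real.sinh t * Real.cosh t - Real.sinh t with hp0
  have h7 : ∀ t : ℝ, 0 ≤ t → 0 ≤ p7 t := by
    intro t ht
    have hs : (0:ℝ) ≤ Real.sinh t := Real.sinh_nonneg_iff.2 ht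
    have hc : (1:ℝ) ≤ Real.cosh t := Real.one_le_cosh t
    have hts : t ≤ Real.sinh t := by
      rcases eq_or_lt_of_le ht with h | h
      · simp [← h]
      · exact (Real.self_lt_sinh_iff.2 h).le
    have hsc : Real.sinh t ≤ Real.cosh t := by
      have := Real.cosh_sub_sinh t
      nlinarith [Real.exp_pos (-t)]
    have ht2 : t^2 ≤ Real.cosh t + Real.sinh t := by
      rw [Real.cosh_add_sinh]; exact sq_le_exp t ht
    have h1 : t * Real.sinh t ≤ Real.sinh t * Real.sinh t :=
      mul_le_mul_of_nonneg_right hts hs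
    have h2 : t^2 * Real.cosh t ≤ (Real.cosh t + Real.sinh t) * Real.cosh t :=
      mul_le_mul_of_nonneg_right ht2 (by linarith)
    have h3 : Real.sinh t * Real.cosh t ≤ Real.cosh t * Real.cosh t :=
      mul_le_mul_of_nonneg_right hsc (by linarith)
    simp only [hp7]
    nlinarith [mul_le_mul_of_nonneg_left hc (by linarith : (0:ℝ) ≤ Real.cosh t)]
  have step : ∀ (f g : ℝ → ℝ), (∀ t, HasDerivAt f (g t) t) → f 0 = 0 →
      (∀ t, 0 ≤ t → 0 ≤ g t) → ∀ t, 0 ≤ t → 0 ≤ f t := nonneg_of_hasDerivAt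
  have d6 : ∀ t, HasDerivAt p6 (p7 t) t := by
    intro t
    have hs := Real.hasDerivAt_sinh t
    have hc := Real.hasDerivAt_cosh t
    have := ((((hs.const_mul (64:ℝ)).mul hc).sub (hs.const_mul 25)).sub
      (((hasDerivAt_id t).const_mul (11:ℝ)).mul hc)).sub ((hasDerivAt_pow 2 t).mul hs)
    refine this.congr_deriv ?_
    simp [hp6, hp7]; ring
  have d5 : ∀ t, HasDerivAt p5 (p6 t) t := by
    intro t
    have hs := Real.hasDerivAt_sinh t
    have hc := Real.hasDerivAt_cosh t
    have := (((((hc.pow 2).const_mul (16:ℝ)).add ((hs.pow 2).const_mul 16)).sub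
      (hc.const_mul 16)).sub ((((hasDerivAt_id t).const_mul (9:ℝ)).mul hs))).sub
      ((hasDerivAt_pow 2 t).mul hc)
    refine this.congr_deriv ?_
    simp [hp5, hp6]; ring
  have d4 : ∀ t, HasDerivAt p4 (p5 t) t := by
    intro t
    have hs := Real.hasDerivAt_sinh t
    have hc := Real.hasDerivAt_cosh t
    have := ((((hs.const_mul (16:ℝ)).mul hc).sub (hs.const_mul 9)).sub
      (((hasDerivAt_id t).const_mul (7:ℝ)).mul hc)).sub ((hasDerivAt_pow 2 t).mul hs)
    refine this.congr_deriv ?_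
    simp [hp4, hp5]; ring
  have d3 : ∀ t, HasDerivAt p3 (p4 t) t := by
    intro t
    have hs := Real.hasDerivAt_sinh t
    have hc := Real.hasDerivAt_cosh t
    have := (((((hc.pow 2).const_mul (4:ℝ)).add ((hs.pow 2).const_mul 4)).sub
      (hc.const_mul 4)).sub ((((hasDerivAt_id t).const_mul (5:ℝ)).mul hs))).sub
      ((hasDerivAt_pow 2 t).mul hc)
    refine this.congr_deriv ?_
    simp [hp3, hp4]; ring
  have d2 : ∀ t, HasDerivAt p2 (p3 t) t := by
    intro t
    have hs := Real.hasDerivAt_sinh t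
    have hc := Real.hasDerivAt_cosh t
    have := ((((hs.const_mul (4:ℝ)).mul hc).sub hs).sub
      (((hasDerivAt_id t).const_mul (3:ℝ)).mul hc)).sub ((hasDerivAt_pow 2 t).mul hs)
    refine this.congr_deriv ?_
    simp [hp2, hp3]; ring
  have d1 : ∀ t, HasDerivAt p1 (p2 t) t := by
    intro t
    have hs := Real.hasDerivAt_sinh t
    have hc := Real.hasDerivAt_cosh t
    have := ((((hc.pow 2).add (hs.pow 2)).sub (hasDerivAt_const t 1)).sub
      ((hasDerivAt_id t).mul hs)).sub ((hasDerivAt_pow 2 t).mul hc)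
    refine this.congr_deriv ?_
    simp [hp1, hp2]; ring
  have d0 : ∀ t, HasDerivAt p0 (p1 t) t := by
    intro t
    have hs := Real.hasDerivAt_sinh t
    have hc := Real.hasDerivAt_cosh t
    have := (((((hasDerivAt_id t).mul hc).sub (hasDerivAt_id t)).sub
      ((hasDerivAt_pow 2 t).mul hs)).add (hs.mul hc)).sub hs
    refine this.congr_deriv ?_
    simp [hp0, hp1]
    nlinarith [Real.cosh_sq t, Real.sinh_sq t]
  have h6 := step p6 p7 d6 (by simp [hp6]) h7
  have h5 := step p5 p6 d5 (by simp [hp5, Real.cosh_zero]) h6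
  have h4 := step p4 p5 d4 (by simp [hp4]) h5
  have h3 := step p3 p4 d3 (by simp [hp3, Real.cosh_zero]) h4
  have h2 := step p2 p3 d2 (by simp [hp2]) h3
  have h1 := step p1 p2 d1 (by simp [hp1, Real.cosh_zero]) h2
  exact step p0 p1 d0 (by simp [hp0]) h1

private lemma DD_pos {t : ℝ} (ht : 0 < t) : 0 < DD t := by
  have := Real.self_lt_sinh_iff.2 ht
  simp only [DD]; linarith

private lemma key_mono {u v : ℝ} (hu : 0 < u) (huv : u ≤ v) :
    NN u * DD v ≤ NN v * DD u := by
  have hv : 0 < v := lt_of_lt_of_le hu huv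
  have hF : MonotoneOn (fun t => NN t / DD t) (Set.Ioi (0:ℝ)) := by
    apply monotoneOn_of_deriv_nonneg (convex_Ioi 0)
    · intro x hx
      have hx : (0:ℝ) < x := hx
      have hNc : ContinuousAt NN x :=
        ((continuousAt_id.mul Real.continuous_cosh.continuousAt).sub
          Real.continuous_sinh.continuousAt : ContinuousAt (fun y => y * Real.cosh y - Real.sinh y) x)
      have hDc : ContinuousAt DD x :=
        (Real.continuous_sinh.continuousAt.sub continuousAt_id :
          ContinuousAt (fun y => Real.sinh y - y) x)
      exact (hNc.div hDc (ne_of_gt (DD_pos hx))).continuousWithinAt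
    · intro x hx
      rw [interior_Ioi] at hx
      have hN : HasDerivAt NN (x * Real.sinh x) x := by
        have := ((hasDerivAt_id x).mul (Real.hasDerivAt_cosh x)).sub (Real.hasDerivAt_sinh x)
        refine this.congr_deriv ?_
        simp only [id_eq]
        ring
      have hD : HasDerivAt DD (Real.cosh x - 1) x :=
        (Real.hasDerivAt_sinh x).sub (hasDerivAt_id x)
      exact ((hN.div hD (ne_of_gt (DD_pos hx))).differentiableAt).differentiableWithinAt
    · intro x hx
      rw [interior_Ioi] at hx
      have hN : HasDerivAt NN (x * Real.sinh x) x := by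
        have := ((hasDerivAt_id x).mul (Real.hasDerivAt_cosh x)).sub (Real.hasDerivAt_sinh x)
        refine this.congr_deriv ?_
        simp only [id_eq]
        ring
      have hD : HasDerivAt DD (Real.cosh x - 1) x :=
        (Real.hasDerivAt_sinh x).sub (hasDerivAt_id x)
      have hdiv := hN.div hD (ne_of_gt (DD_pos hx))
      rw [show (fun t => NN t / DD t) = NN / DD from rfl, hdiv.deriv]
      apply div_nonneg _ (sq_nonneg _)
      have h0 := p0_nonneg x (le_of_lt hx)
      have hpy : x * Real.cosh x ^ 2 - x * Real.sinh x ^ 2 = x := by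
        linear_combination x * Real.cosh_sq_sub_sinh_sq x
      simp only [NN, DD]
      nlinarith [h0, hpy]
  have := hF (Set.mem_Ioi.2 hu) (Set.mem_Ioi.2 hv) huv
  rw [div_le_div_iff₀ (DD_pos hu) (DD_pos hv)] at this
  exact this

private lemma point_iff (b : ℝ) (hb : 0 ≤ b) (t : ℝ) (ht : 0 ≤ t) :
    (Real.arsinh (Real.sinh t) ≤ (b + 1) * Real.sinh t / (b + Real.sqrt (1 + Real.sinh t ^ 2))
      ↔ NN t ≤ b * DD t) := by
  have hsq : Real.sqrt (1 + Real.sinh t ^ 2) = Real.cosh t := by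
    rw [show (1:ℝ) + Real.sinh t ^ 2 = Real.cosh t ^ 2 by rw [Real.cosh_sq t]; ring]
    exact Real.sqrt_sq (Real.cosh_pos t).le
  have hc : (1:ℝ) ≤ Real.cosh t := Real.one_le_cosh t
  have hpos : 0 < b + Real.sqrt (1 + Real.sinh t ^ 2) := by rw [hsq]; linarith
  rw [le_div_iff₀ hpos, Real.arsinh_sinh, hsq]
  simp only [NN, DD]
  constructor <;> intro h <;> nlinarith

theorem stmt13 (r : ℝ) (hr : 0 < r) (b : ℝ) (hb : 0 ≤ b) :
    (∀ x : ℝ, 0 ≤ x → x ≤ r →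
      Real.arsinh x ≤ (b + 1) * x / (b + Real.sqrt (1 + x ^ 2))) ↔
    (Real.sqrt (1 + r ^ 2) * Real.arsinh r - r) / (r - Real.arsinh r) ≤ b := by
  set A := Real.arsinh r with hA
  have hA0 : 0 < A := Real.arsinh_pos_iff.2 hr
  have hrA : Real.sinh A = r := Real.sinh_arsinh r
  have hcA : Real.cosh A = Real.sqrt (1 + r ^ 2) := Real.cosh_arsinh r
  have hDA : 0 < r - A := by
    have := Real.self_lt_sinh_iff.2 hA0
    rw [hrA] at this; linarith
  have hDA' : DD A = r - A := by simp only [DD, hrA]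
  have hNA : NN A = Real.sqrt (1 + r ^ 2) * A - r := by
    simp only [NN, hrA, hcA]; ring
  constructor
  · intro h
    have hx := h r hr.le le_rfl
    have := (point_iff b hb A hA0.le).1 (by rwa [hrA])
    rw [div_le_iff₀ hDA, hNA, hDA'] at *
    linarith [this]
  · intro hBb x hx hxr
    obtain ⟨t, ht0, rfl⟩ : ∃ t, 0 ≤ t ∧ x = Real.sinh t :=
      ⟨Real.arsinh x, Real.arsinh_nonneg_iff.2 hx, (Real.sinh_arsinh x).symm⟩
    rw [point_iff b hb t ht0]
    have htA : t ≤ A := by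
      rw [hA, ← Real.arsinh_sinh t]
      exact Real.arsinh_le_arsinh.2 hxr
    have hNADA : NN A ≤ b * DD A := by
      rw [hNA, hDA']
      rw [div_le_iff₀ hDA] at hBb
      linarith
    rcases eq_or_lt_of_le ht0 with h0 | h0
    · simp only [NN, DD, ← h0]; simp
    · have hk := key_mono h0 htA
      have hDt := DD_pos h0
      have hDApos := DD_pos hA0
      have : NN t * DD A ≤ (b * DD t) * DD A := by
        calc NN t * DD A ≤ NN A * DD t := hk
        _ ≤ (b * DD A) * DD t := mul_le_mul_of_nonneg_right hNADA hDt.le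
        _ = (b * DD t) * DD A := by ring
      exact le_of_mul_le_mul_right this hDApos
end

section
/- For every real θ ≤ −1, the function h_θ(x) = x·(θ/√(x² + 1) + 1)/(θ + 1/√(x² + 1)) − arcsinh(x) is strictly decreasing on (0, ∞). -/
open Real Set

-- key derivative lemma
lemma aux (θ x : ℝ) (hθ : θ ≤ -1) (hx : 0 < x) :
    HasDerivAt (fun x : ℝ => x * (θ / Real.sqrt (x ^ 2 + 1) + 1) / (θ + 1 / Real.sqrt (x ^ 2 + 1))
        - Real.arsinh x)
      (x ^ 2 * (θ * Real.sqrt (x ^ 2 + 1) - θ ^ 2 + 2)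
        / (Real.sqrt (x ^ 2 + 1) * (θ * Real.sqrt (x ^ 2 + 1) + 1) ^ 2)) x := by
  set s := Real.sqrt (x ^ 2 + 1) with hsdef
  have hpos : (0:ℝ) < x ^ 2 + 1 := by positivity
  have hs0 : 0 < s := Real.sqrt_pos.mpr hpos
  have hs2 : s ^ 2 = x ^ 2 + 1 := Real.sq_sqrt hpos.le
  have hs1 : 1 < s := by nlinarith [hs2, sq_nonneg x, hs0]
  have hv : θ + 1 / s < 0 := by
    have : 1 / s < 1 := by rw [div_lt_one hs0]; exact hs1
    linarith
  have hvne : θ + 1 / s ≠ 0 := hv.ne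
  have hw : θ * s + 1 < 0 := by nlinarith
  have hS : HasDerivAt (fun y : ℝ => Real.sqrt (y ^ 2 + 1)) (x / s) x := by
    have h1 : HasDerivAt (fun y : ℝ => y ^ 2 + 1) (2 * x) x := by
      simpa using ((hasDerivAt_pow 2 x).add_const 1)
    have := (Real.hasDerivAt_sqrt hpos.ne').comp x h1
    refine this.congr_deriv ?_
    symm
    field_simp [hsdef]
    ring
  have hU : HasDerivAt (fun y : ℝ => y * (θ / Real.sqrt (y ^ 2 + 1) + 1))
      (1 * (θ / s + 1) + x * ((0 * s - θ * (x / s)) / s ^ 2)) x :=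
    (hasDerivAt_id x).mul (((hasDerivAt_const x θ).div hS hs0.ne').add_const 1)
  have hV : HasDerivAt (fun y : ℝ => θ + 1 / Real.sqrt (y ^ 2 + 1))
      ((0 * s - 1 * (x / s)) / s ^ 2) x :=
    ((hasDerivAt_const x (1:ℝ)).div hS hs0.ne').const_add θ
  have hA : HasDerivAt (fun y : ℝ => Real.arsinh y) (1 / s) x := by
    have := Real.hasDerivAt_arsinh x
    convert this using 1
    rw [hsdef, one_div, add_comm]
  have hD := (hU.div hV hvne).sub hA
  refine hD.congr_deriv ?_
  symm
  have hx2 : x ^ 2 = s ^ 2 - 1 := by linarith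
  rw [← hsdef]
  field_simp [hs0.ne', hw.ne]
  linear_combination (-(θ*s^2 + s)) * hs2

theorem stmt14 (θ : ℝ) (hθ : θ ≤ -1) :
    StrictAntiOn
      (fun x : ℝ => x * (θ / Real.sqrt (x ^ 2 + 1) + 1) / (θ + 1 / Real.sqrt (x ^ 2 + 1))
        - Real.arsinh x)
      (Set.Ioi (0 : ℝ)) := by
  apply strictAntiOn_of_deriv_neg (convex_Ioi 0)
  · exact fun x hx => (aux θ x hθ hx).differentiableAt.continuousAt.continuousWithinAt
  · intro x hx
    rw [interior_Ioi] at hx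
    rw [(aux θ x hθ hx).deriv]
    have hpos : (0:ℝ) < x ^ 2 + 1 := by positivity
    have hs0 : 0 < Real.sqrt (x ^ 2 + 1) := Real.sqrt_pos.mpr hpos
    have hs2 : Real.sqrt (x ^ 2 + 1) ^ 2 = x ^ 2 + 1 := Real.sq_sqrt hpos.le
    have hxp : 0 < x := hx
    have hs1 : 1 < Real.sqrt (x ^ 2 + 1) := by nlinarith [mul_pos hxp hxp]
    apply div_neg_of_neg_of_pos
    · have h1 : θ * Real.sqrt (x ^ 2 + 1) < θ := by nlinarith
      have h2 : θ - θ ^ 2 + 2 ≤ 0 := by nlinarith [mul_nonneg (by linarith : (0:ℝ) ≤ -(θ+1)) (by linarith : (0:ℝ) ≤ 2 - θ)]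
      have hx2 : (0:ℝ) < x ^ 2 := by positivity
      nlinarith
    · have hw : θ * Real.sqrt (x ^ 2 + 1) + 1 < 0 := by nlinarith
      have : (0:ℝ) < (θ * Real.sqrt (x ^ 2 + 1) + 1) ^ 2 := by nlinarith
      exact mul_pos hs0 this
end

section
/- For every real θ with 0 ≤ θ ≤ 2, the function h_θ(x) = x·(θ/√(x² + 1) + 1)/(θ + 1/√(x² + 1)) − arcsinh(x) is strictly increasing on (0, ∞). -/
theorem deriv15 (θ : ℝ) (hθ0 : 0 ≤ θ) (x : ℝ) (hx : 0 < x) :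
    HasDerivAt
      (fun x : ℝ => x * (θ / Real.sqrt (x ^ 2 + 1) + 1) / (θ + 1 / Real.sqrt (x ^ 2 + 1))
        - Real.arsinh x)
      (x^2 * (θ * Real.sqrt (x^2+1) - θ^2 + 2) /
        (Real.sqrt (x^2+1) * (θ * Real.sqrt (x^2+1) + 1)^2)) x := by
  have hx2 : (0:ℝ) < x^2 + 1 := by positivity
  have hs0 : 0 < Real.sqrt (x^2+1) := Real.sqrt_pos.2 hx2
  have hs2 : Real.sqrt (x^2+1) ^ 2 = x^2 + 1 := Real.sq_sqrt hx2.le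
  have hS : HasDerivAt (fun y : ℝ => Real.sqrt (y^2+1)) (x / Real.sqrt (x^2+1)) x := by
    have h2 := (by simpa using ((hasDerivAt_pow 2 x).add_const 1) :
      HasDerivAt (fun y:ℝ => y^2+1) (2*x) x).sqrt (ne_of_gt hx2)
    convert h2 using 1
    field_simp
  have hnum : HasDerivAt (fun y : ℝ => y * (θ / Real.sqrt (y^2+1) + 1))
      (1 * (θ / Real.sqrt (x^2+1) + 1) + x * ((0 * Real.sqrt (x^2+1) - θ * (x / Real.sqrt (x^2+1))) / Real.sqrt (x^2+1)^2)) x :=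
    (hasDerivAt_id x).mul (((hasDerivAt_const x θ).div hS hs0.ne').add_const 1)
  have hden : HasDerivAt (fun y : ℝ => θ + 1 / Real.sqrt (y^2+1))
      ((0 * Real.sqrt (x^2+1) - 1 * (x / Real.sqrt (x^2+1))) / Real.sqrt (x^2+1)^2) x :=
    ((hasDerivAt_const x (1:ℝ)).div hS hs0.ne').const_add θ
  have hden0 : θ + 1 / Real.sqrt (x^2+1) ≠ 0 := by positivity
  have hq := (hnum.div hden hden0).sub (Real.hasDerivAt_arsinh x)
  have hrw : Real.sqrt (1 + x^2) = Real.sqrt (x^2+1) := by rw [add_comm]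
  rw [hrw] at hq
  refine hq.congr_deriv (Eq.symm ?_)
  generalize hgen : Real.sqrt (x^2+1) = s at hs0 hs2 ⊢
  have hθs : θ * s + 1 ≠ 0 := by positivity
  have hden0' : θ + 1 / s ≠ 0 := by positivity
  field_simp
  linear_combination (-s - θ*s^2) * hs2

theorem stmt15 (θ : ℝ) (hθ0 : 0 ≤ θ) (hθ2 : θ ≤ 2) :
    StrictMonoOn
      (fun x : ℝ => x * (θ / Real.sqrt (x ^ 2 + 1) + 1) / (θ + 1 / Real.sqrt (x ^ 2 + 1))
        - Real.arsinh x)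
      (Set.Ioi (0 : ℝ)) := by
  have key : ∀ x ∈ interior (Set.Ioi (0:ℝ)), 0 < deriv
      (fun x : ℝ => x * (θ / Real.sqrt (x ^ 2 + 1) + 1) / (θ + 1 / Real.sqrt (x ^ 2 + 1))
        - Real.arsinh x) x := by
    intro x hx
    rw [interior_Ioi] at hx
    have hx : 0 < x := hx
    rw [(deriv15 θ hθ0 x hx).deriv]
    have hx2 : (0:ℝ) < x^2 + 1 := by positivity
    have hs1 : 1 < Real.sqrt (x^2+1) := by
      nlinarith [Real.sq_sqrt hx2.le, Real.sqrt_nonneg (x^2+1), sq_nonneg x]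
    have hfac : 0 < θ * Real.sqrt (x^2+1) - θ^2 + 2 := by
      rcases eq_or_lt_of_le hθ2 with h | h
      · nlinarith
      · nlinarith [mul_le_mul_of_nonneg_left hs1.le hθ0]
    have hs0 : 0 < Real.sqrt (x^2+1) := by linarith
    positivity
  apply strictMonoOn_of_deriv_pos (convex_Ioi 0) _ key
  intro x hx
  have hx : 0 < x := hx
  exact ((deriv15 θ hθ0 x hx).differentiableAt).continuousAt.continuousWithinAt
end
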